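/- arXiv:1003.3498 — 3 statements merged into one kernel-verified Lean document; each statement's English description precedes it below -/
import Mathlib

section
/- Fix $\epsilon > 0$ and let $L := \log(1/p)$. Let $E_1$ be the event that there exists a matching $F \subseteq V^{(2)}$ with $|F| > Lnp$ all of whose elements are bad edges of $G(n,p)$. There is a constant $C(\epsilon) > 0$ depending only on $\epsilon$ such that whenever $C(\epsilon)^{-1} n^{-1}\log n \le p \le C(\epsilon)$, $\mathbb{P}(E_1) \le \exp(-C(\epsilon) n^2 p^2 \log(1/p))$. -/
open MeasureTheory ProbabilityTheory Real
open scoped Classical ENNReal NNReal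

/-- The Erdős–Rényi random graph measure: each (non-diagonal) unordered pair of vertices of
`Fin n` is an edge independently with probability `p`. The sample space records, for each
unordered pair, whether it is an edge. -/
noncomputable def erMeasure (n : ℕ) (p : ℝ≥0) (hp : p ≤ 1) :
    Measure (Sym2 (Fin n) → Bool) :=
  Measure.pi fun _ => (PMF.bernoulli p hp).toMeasure

/-- Adjacency in the realization `ω`. -/
def Adj {n : ℕ} (ω : Sym2 (Fin n) → Bool) (u v : Fin n) : Prop :=
  u ≠ v ∧ ω s(u, v) = true

/-- The degree of a vertex. -/
noncomputable def deg {n : ℕ} (ω : Sym2 (Fin n) → Bool) (u : Fin n) : ℕ :=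
  (Finset.univ.filter (fun v => Adj ω u v)).card

/-- `t` is a triangle: a set of three pairwise adjacent vertices. -/
def IsTriangle {n : ℕ} (ω : Sym2 (Fin n) → Bool) (t : Finset (Fin n)) : Prop :=
  t.card = 3 ∧ ∀ u ∈ t, ∀ v ∈ t, u ≠ v → Adj ω u v

/-- The number of triangles. -/
noncomputable def triangleCount {n : ℕ} (ω : Sym2 (Fin n) → Bool) : ℕ :=
  (Finset.univ.filter (fun t : Finset (Fin n) => IsTriangle ω t)).card

/-- `e` is an edge of the graph. -/
def IsEdge {n : ℕ} (ω : Sym2 (Fin n) → Bool) (e : Sym2 (Fin n)) : Prop :=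
  ¬ e.IsDiag ∧ ω e = true

/-- The number of triangles containing both endpoints of `e`. -/
noncomputable def triOnEdge {n : ℕ} (ω : Sym2 (Fin n) → Bool) (e : Sym2 (Fin n)) : ℕ :=
  (Finset.univ.filter (fun t : Finset (Fin n) => IsTriangle ω t ∧ ∀ u ∈ e, u ∈ t)).card

/-- A good edge: an edge of the graph contained in fewer than `ε ℓ n p` triangles,
where `ℓ = 1 / log(1/p)`. -/
def GoodEdge {n : ℕ} (ε p : ℝ) (ω : Sym2 (Fin n) → Bool) (e : Sym2 (Fin n)) : Prop :=
  IsEdge ω e ∧ (triOnEdge ω e : ℝ) < ε * (1 / Real.log (1 / p)) * n * p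

/-- A bad edge: an edge of the graph that is not good. -/
def BadEdge {n : ℕ} (ε p : ℝ) (ω : Sym2 (Fin n) → Bool) (e : Sym2 (Fin n)) : Prop :=
  IsEdge ω e ∧ ¬ ((triOnEdge ω e : ℝ) < ε * (1 / Real.log (1 / p)) * n * p)

/-- A good vertex: one with fewer than `7np` neighbors. -/
def GoodVertex {n : ℕ} (p : ℝ) (ω : Sym2 (Fin n) → Bool) (u : Fin n) : Prop :=
  (deg ω u : ℝ) < 7 * n * p

/-- `T'`: the number of triangles all of whose edges are good. -/
noncomputable def triGoodEdges {n : ℕ} (ε p : ℝ) (ω : Sym2 (Fin n) → Bool) : ℕ :=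
  (Finset.univ.filter (fun t : Finset (Fin n) => IsTriangle ω t ∧
    ∀ u ∈ t, ∀ v ∈ t, u ≠ v → GoodEdge ε p ω s(u, v))).card

/-- `T₀`: the number of triangles with at least one bad edge but all good vertices. -/
noncomputable def triBadEdgeGoodVerts {n : ℕ} (ε p : ℝ) (ω : Sym2 (Fin n) → Bool) : ℕ :=
  (Finset.univ.filter (fun t : Finset (Fin n) => IsTriangle ω t ∧
    (∃ u ∈ t, ∃ v ∈ t, u ≠ v ∧ BadEdge ε p ω s(u, v)) ∧
    ∀ u ∈ t, GoodVertex p ω u)).card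

/-- The number of triangles with exactly `k` bad vertices. -/
noncomputable def triBadVerts {n : ℕ} (p : ℝ) (k : ℕ) (ω : Sym2 (Fin n) → Bool) : ℕ :=
  (Finset.univ.filter (fun t : Finset (Fin n) => IsTriangle ω t ∧
    (t.filter (fun u => ¬ GoodVertex p ω u)).card = k)).card

/-- `t_{uv}` for `e = {u,v}`: the number of common neighbors of `u` and `v` outside `{u,v}`. -/
noncomputable def commonNbrs {n : ℕ} (ω : Sym2 (Fin n) → Bool) (e : Sym2 (Fin n)) : ℕ :=
  (Finset.univ.filter (fun w => w ∉ e ∧ ∀ u ∈ e, Adj ω u w)).card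

/-- A matching: a collection of non-diagonal unordered pairs, no two of which share a vertex. -/
def IsMatching {n : ℕ} (A : Finset (Sym2 (Fin n))) : Prop :=
  (∀ e ∈ A, ¬ e.IsDiag) ∧ ∀ e ∈ A, ∀ f ∈ A, e ≠ f → ∀ v : Fin n, v ∈ e → v ∉ f

namespace E1aux

open Nat

/-- exists representation -/
lemma sym2_exists {α : Type*} (e : Sym2 α) : ∃ a b, e = s(a, b) :=
  e.ind (fun a b => ⟨a, b, rfl⟩) 

lemma card_filter_mem_sym2 {n : ℕ} (e : Sym2 (Fin n)) :
    (Finset.univ.filter (· ∈ e)).card ≤ 2 := by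
  obtain ⟨a, b, rfl⟩ := sym2_exists e
  have hsub : (Finset.univ.filter (· ∈ s(a, b))) ⊆ {a, b} := by
    intro x hx
    simp only [Finset.mem_filter] at hx
    have := Sym2.mem_iff.mp hx.2
    simp [this]
  exact (Finset.card_le_card hsub).trans ((Finset.card_insert_le _ _).trans (by simp))

lemma choose_le_exp_pow (b d : ℕ) (hd : 1 ≤ d) :
    (b.choose d : ℝ) ≤ (Real.exp 1) ^ d * b ^ d / d ^ d := by
  have h1 : (b.choose d : ℝ) ≤ (b ^ d : ℝ) / (d ! : ℝ) := by
    exact_mod_cast Nat.choose_le_pow_div d b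
  have h2 : (d : ℝ) ^ d / (d ! : ℝ) ≤ Real.exp d :=
    Real.pow_div_factorial_le_exp (x := (d:ℝ)) (Nat.cast_nonneg d) d
  have hfac : (0:ℝ) < d ! := by exact_mod_cast (Nat.factorial_pos d)
  have hdpos : (0:ℝ) < (d:ℝ) ^ d := by positivity
  have hexp : Real.exp (d : ℝ) = (Real.exp 1) ^ d := by
    rw [← Real.exp_nat_mul]; ring_nf
  -- d^d ≤ d! * exp(1)^d
  have h3 : (d:ℝ) ^ d ≤ (d ! : ℝ) * (Real.exp 1) ^ d := by
    rw [← hexp]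
    calc (d:ℝ) ^ d = ((d:ℝ)^d / (d ! : ℝ)) * (d ! : ℝ) := by field_simp
    _ ≤ Real.exp d * (d ! : ℝ) := by
        apply mul_le_mul_of_nonneg_right h2 hfac.le
    _ = (d ! : ℝ) * Real.exp d := mul_comm _ _
  calc (b.choose d : ℝ) ≤ (b ^ d : ℝ) / (d ! : ℝ) := h1
  _ ≤ (Real.exp 1) ^ d * b ^ d / d ^ d := by
      rw [div_le_div_iff₀ hfac hdpos]
      calc (b:ℝ)^d * d^d ≤ (b:ℝ)^d * ((d ! : ℝ) * (Real.exp 1)^d) := by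
            apply mul_le_mul_of_nonneg_left h3 (by positivity)
      _ = Real.exp 1 ^ d * (b:ℝ)^d * (d ! : ℝ) := by ring
  
end E1aux
namespace E1aux

/-- The vertex set of a finite set of pairs. -/
noncomputable def VA {n : ℕ} (A : Finset (Sym2 (Fin n))) : Finset (Fin n) :=
  A.biUnion (fun e => Finset.univ.filter (· ∈ e))

lemma mem_VA {n : ℕ} {A : Finset (Sym2 (Fin n))} {v : Fin n} :
    v ∈ VA A ↔ ∃ e ∈ A, v ∈ e := by simp [VA]

lemma card_VA {n : ℕ} (A : Finset (Sym2 (Fin n))) : (VA A).card ≤ 2 * A.card := by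
  calc (VA A).card ≤ ∑ e ∈ A, (Finset.univ.filter (· ∈ e)).card := Finset.card_biUnion_le
  _ ≤ ∑ _e ∈ A, 2 := Finset.sum_le_sum (fun e _ => card_filter_mem_sym2 e)
  _ = 2 * A.card := by rw [Finset.sum_const, smul_eq_mul, mul_comm]

/-- The two edges from the endpoints of `q.1` to `q.2`. -/
noncomputable def cherry {n : ℕ} (q : Sym2 (Fin n) × Fin n) : Finset (Sym2 (Fin n)) :=
  (Finset.univ.filter (· ∈ q.1)).image (fun u => s(u, q.2))

lemma mem_cherry {n : ℕ} {q : Sym2 (Fin n) × Fin n} {x : Sym2 (Fin n)} :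
    x ∈ cherry q ↔ ∃ u ∈ q.1, s(u, q.2) = x := by simp [cherry]

noncomputable def edgesOf {n : ℕ} (D : Finset (Sym2 (Fin n) × Fin n)) :
    Finset (Sym2 (Fin n)) := D.biUnion cherry

/-- matching members are vertex-disjoint, so two members sharing a vertex coincide -/
lemma matching_eq {n : ℕ} {A : Finset (Sym2 (Fin n))} (hA : IsMatching A)
    {e f : Sym2 (Fin n)} (he : e ∈ A) (hf : f ∈ A) {v : Fin n}
    (hve : v ∈ e) (hvf : v ∈ f) : e = f := by
  by_contra hne
  exact hA.2 e he f hf hne v hve hvf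

lemma two_le_card_cherry {n : ℕ} {A : Finset (Sym2 (Fin n))} (hA : IsMatching A)
    {q : Sym2 (Fin n) × Fin n} (hq : q ∈ A ×ˢ (Finset.univ \ VA A)) :
    2 ≤ (cherry q).card := by
  obtain ⟨e, w⟩ := q
  rw [Finset.mem_product] at hq
  obtain ⟨he, hw⟩ := hq
  rw [Finset.mem_sdiff] at hw
  obtain ⟨a, b, rfl⟩ := sym2_exists e
  have hab : a ≠ b := by
    intro h; exact hA.1 _ he (by simp [h])
  have haVA : a ∈ VA A := mem_VA.mpr ⟨_, he, by simp⟩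
  have hbVA : b ∈ VA A := mem_VA.mpr ⟨_, he, by simp⟩
  have hwa : w ≠ a := fun h => hw.2 (h ▸ haVA)
  have hwb : w ≠ b := fun h => hw.2 (h ▸ hbVA)
  have h1 : s(a, w) ∈ cherry (s(a, b), w) := mem_cherry.mpr ⟨a, by simp, rfl⟩
  have h2 : s(b, w) ∈ cherry (s(a, b), w) := mem_cherry.mpr ⟨b, by simp, rfl⟩
  have hne : s(a, w) ≠ s(b, w) := by
    intro h
    rw [Sym2.eq_iff] at h
    rcases h with ⟨h1, _⟩ | ⟨h1, _⟩
    · exact hab h1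
    · exact hwa h1.symm
  calc 2 = ({s(a,w), s(b,w)} : Finset (Sym2 (Fin n))).card := (Finset.card_pair hne).symm
  _ ≤ (cherry (s(a,b), w)).card := Finset.card_le_card (by
      intro x hx
      rcases Finset.mem_insert.mp hx with h | h
      · exact h ▸ h1
      · exact (Finset.mem_singleton.mp h) ▸ h2)

lemma edgesOf_card {n : ℕ} {A : Finset (Sym2 (Fin n))} (hA : IsMatching A)
    {D : Finset (Sym2 (Fin n) × Fin n)} (hD : D ⊆ A ×ˢ (Finset.univ \ VA A)) :
    2 * D.card ≤ (edgesOf D).card := by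
  have hdisj : ∀ q ∈ D, ∀ q' ∈ D, q ≠ q' → Disjoint (cherry q) (cherry q') := by
    intro q hq q' hq' hne
    rw [Finset.disjoint_left]
    intro x hxq hxq'
    obtain ⟨u, hu, hx⟩ := mem_cherry.mp hxq
    obtain ⟨u', hu', hx'⟩ := mem_cherry.mp hxq'
    have hqA := hD hq
    have hq'A := hD hq'
    rw [Finset.mem_product, Finset.mem_sdiff] at hqA hq'A
    have huVA : u ∈ VA A := mem_VA.mpr ⟨_, hqA.1, hu⟩
    have hu'VA : u' ∈ VA A := mem_VA.mpr ⟨_, hq'A.1, hu'⟩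
    have heq : s(u, q.2) = s(u', q'.2) := hx.trans hx'.symm
    rw [Sym2.eq_iff] at heq
    rcases heq with ⟨h1, h2⟩ | ⟨h1, h2⟩
    · -- u = u', q.2 = q'.2
      have : q.1 = q'.1 := matching_eq hA hqA.1 hq'A.1 hu (h1 ▸ hu')
      exact hne (Prod.ext this h2)
    · -- u = q'.2 : but u ∈ VA and q'.2 ∉ VA
      exact hq'A.2.2 (h1 ▸ huVA)
  calc 2 * D.card = ∑ _q ∈ D, 2 := by rw [Finset.sum_const, smul_eq_mul, mul_comm]
  _ ≤ ∑ q ∈ D, (cherry q).card := Finset.sum_le_sum (fun q hq => two_le_card_cherry hA (hD hq))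
  _ = (edgesOf D).card := (Finset.card_biUnion hdisj).symm


/-- the common-neighbour set of a pair -/
noncomputable def Nbh {n : ℕ} (ω : Sym2 (Fin n) → Bool) (e : Sym2 (Fin n)) :
    Finset (Fin n) := Finset.univ.filter (fun w => ∀ u ∈ e, Adj ω u w)

lemma not_mem_of_mem_Nbh {n : ℕ} {ω : Sym2 (Fin n) → Bool} {e : Sym2 (Fin n)}
    {w : Fin n} (hw : w ∈ Nbh ω e) {u : Fin n} (hu : u ∈ e) : u ≠ w := by
  rw [Nbh, Finset.mem_filter] at hw
  exact (hw.2 u hu).1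

lemma adj_of_mem_Nbh {n : ℕ} {ω : Sym2 (Fin n) → Bool} {e : Sym2 (Fin n)}
    {w : Fin n} (hw : w ∈ Nbh ω e) {u : Fin n} (hu : u ∈ e) : Adj ω u w := by
  rw [Nbh, Finset.mem_filter] at hw
  exact hw.2 u hu

lemma triOnEdge_le_Nbh {n : ℕ} (ω : Sym2 (Fin n) → Bool) (e : Sym2 (Fin n))
    (he : ¬ e.IsDiag) : triOnEdge ω e ≤ (Nbh ω e).card := by
  classical
  obtain ⟨a, b, rfl⟩ := sym2_exists e
  have hab : a ≠ b := by simpa [Sym2.mk_isDiag_iff] using he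
  set T := Finset.univ.filter
    (fun t : Finset (Fin n) => IsTriangle ω t ∧ ∀ u ∈ s(a,b), u ∈ t) with hT
  have hsubim : T ⊆ (Nbh ω s(a,b)).image (fun w => insert a (insert b ({w} : Finset (Fin n)))) := by
    intro t ht
    rw [hT, Finset.mem_filter] at ht
    obtain ⟨-, htri, hsub⟩ := ht
    have hat : a ∈ t := hsub a (by simp)
    have hbt : b ∈ t := hsub b (by simp)
    have hcard_ab : ({a, b} : Finset (Fin n)).card = 2 := Finset.card_pair hab
    have hct : t.card = 3 := htri.1
    have hpos : 0 < (t \ {a, b}).card := by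
      have h := Finset.le_card_sdiff ({a,b} : Finset (Fin n)) t
      omega
    obtain ⟨w, hw⟩ := Finset.card_pos.mp hpos
    rw [Finset.mem_sdiff] at hw
    obtain ⟨hwt, hwab⟩ := hw
    have hwa : w ≠ a := fun h => hwab (by simp [h])
    have hwb : w ≠ b := fun h => hwab (by simp [h])
    have hsub2 : insert a (insert b ({w} : Finset (Fin n))) ⊆ t := by
      intro x hx
      rcases Finset.mem_insert.mp hx with h | h
      · exact h ▸ hat
      rcases Finset.mem_insert.mp h with h' | h'
      · exact h' ▸ hbt
      · exact (Finset.mem_singleton.mp h') ▸ hwt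
    have hcard3 : (insert a (insert b ({w} : Finset (Fin n)))).card = 3 := by
      rw [Finset.card_insert_of_notMem (by simp [hab, hwa.symm]),
        Finset.card_insert_of_notMem (by simp [hwb.symm])]
      simp
    have heq : insert a (insert b ({w} : Finset (Fin n))) = t :=
      Finset.eq_of_subset_of_card_le hsub2 (by omega)
    have hwN : w ∈ Nbh ω s(a,b) := by
      rw [Nbh, Finset.mem_filter]
      refine ⟨Finset.mem_univ _, fun u hu => ?_⟩
      have hut : u ∈ t := hsub u hu
      have hune : u ≠ w := by
        rcases Sym2.mem_iff.mp hu with h | h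
        · exact h ▸ hwa.symm
        · exact h ▸ hwb.symm
      exact htri.2 u hut w hwt hune
    exact Finset.mem_image.mpr ⟨w, hwN, heq⟩
  calc triOnEdge ω s(a,b) = T.card := rfl
  _ ≤ _ := Finset.card_le_card hsubim
  _ ≤ (Nbh ω s(a,b)).card := Finset.card_image_le


lemma two_le_card_cherry' {n : ℕ} {e : Sym2 (Fin n)} {w : Fin n}
    (he : ¬ e.IsDiag) (hw : ∀ u ∈ e, u ≠ w) : 2 ≤ (cherry (e, w)).card := by
  obtain ⟨a, b, rfl⟩ := sym2_exists e
  have hab : a ≠ b := by simpa [Sym2.mk_isDiag_iff] using he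
  have hwa : a ≠ w := hw a (by simp)
  have hwb : b ≠ w := hw b (by simp)
  have h1 : s(a, w) ∈ cherry (s(a, b), w) := mem_cherry.mpr ⟨a, by simp, rfl⟩
  have h2 : s(b, w) ∈ cherry (s(a, b), w) := mem_cherry.mpr ⟨b, by simp, rfl⟩
  have hne : s(a, w) ≠ s(b, w) := by
    intro h
    rw [Sym2.eq_iff] at h
    rcases h with ⟨h1, _⟩ | ⟨h1, _⟩
    · exact hab h1
    · exact hwa h1
  calc 2 = ({s(a,w), s(b,w)} : Finset (Sym2 (Fin n))).card := (Finset.card_pair hne).symm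
  _ ≤ (cherry (s(a,b), w)).card := Finset.card_le_card (by
      intro x hx
      rcases Finset.mem_insert.mp hx with h | h
      · exact h ▸ h1
      · exact (Finset.mem_singleton.mp h) ▸ h2)

noncomputable def famA (n m : ℕ) : Finset (Finset (Sym2 (Fin n))) :=
  (Finset.univ.powersetCard m).filter IsMatching

noncomputable def famD {n : ℕ} (d : ℕ) (A : Finset (Sym2 (Fin n))) :
    Finset (Finset (Sym2 (Fin n) × Fin n)) :=
  Finset.powersetCard d (A ×ˢ (Finset.univ \ VA A))

noncomputable def famB {n : ℕ} (d : ℕ) (A : Finset (Sym2 (Fin n))) :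
    Finset (Finset (Sym2 (Fin n))) :=
  Finset.powersetCard d (Finset.univ.filter (fun x : Sym2 (Fin n) => ∀ v ∈ x, v ∈ VA A))

def cylP {n : ℕ} (D : Finset (Sym2 (Fin n) × Fin n)) : Set (Sym2 (Fin n) → Bool) :=
  {ω | ∀ q ∈ D, ∀ u ∈ q.1, ω s(u, q.2) = true}

def cylE {n : ℕ} (B : Finset (Sym2 (Fin n))) : Set (Sym2 (Fin n) → Bool) :=
  {ω | ∀ x ∈ B, ω x = true}

lemma coverage {n : ℕ} {ε pr : ℝ} {m K : ℕ}
    (hbadK : ∀ (ω : Sym2 (Fin n) → Bool) (e : Sym2 (Fin n)), BadEdge ε pr ω e →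
      K ≤ (Nbh ω e).card)
    (hmle : ∀ c : ℕ, Real.log (1/pr) * n * pr < (c : ℝ) → m ≤ c) :
    {ω : Sym2 (Fin n) → Bool | ∃ A : Finset (Sym2 (Fin n)), IsMatching A ∧
        Real.log (1/pr) * n * pr < (A.card : ℝ) ∧ ∀ e ∈ A, BadEdge ε pr ω e}
      ⊆ ⋃ A ∈ famA n m, ((⋃ D ∈ famD (((m+1)/2) * ((K+1)/2)) A, cylP D) ∪
          ⋃ B ∈ famB (((m+1)/2) * ((K+1)/2)) A, cylE B) := by
  intro ω hω
  obtain ⟨A₀, hA₀m, hA₀c, hA₀b⟩ := hω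
  have hmc : m ≤ A₀.card := hmle _ hA₀c
  obtain ⟨A, hAsub, hAcard⟩ := Finset.exists_subset_card_eq hmc
  have hAmatch : IsMatching A :=
    ⟨fun e he => hA₀m.1 e (hAsub he),
     fun e he f hf => hA₀m.2 e (hAsub he) f (hAsub hf)⟩
  have hAbad : ∀ e ∈ A, BadEdge ε pr ω e := fun e he => hA₀b e (hAsub he)
  have hAK : ∀ e ∈ A, K ≤ (Nbh ω e).card := fun e he => hbadK ω e (hAbad e he)
  have hAnd : ∀ e ∈ A, ¬ e.IsDiag := fun e he => hAmatch.1 e he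
  have hAfam : A ∈ famA n m := by
    rw [famA, Finset.mem_filter, Finset.mem_powersetCard]
    exact ⟨⟨Finset.subset_univ _, hAcard⟩, hAmatch⟩
  set m₂ := (m+1)/2 with hm₂
  set K₂ := (K+1)/2 with hK₂
  set d := m₂ * K₂ with hd
  set A₁ := A.filter (fun e => K₂ ≤ ((Nbh ω e).filter (· ∉ VA A)).card) with hA₁
  have hAin : ∀ e ∈ A \ A₁, K₂ ≤ ((Nbh ω e).filter (· ∈ VA A)).card := by
    intro e he
    rw [Finset.mem_sdiff] at he
    obtain ⟨heA, heN⟩ := he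
    have hsplit : ((Nbh ω e).filter (· ∈ VA A)).card
        + ((Nbh ω e).filter (· ∉ VA A)).card = (Nbh ω e).card :=
      Finset.card_filter_add_card_filter_not (fun w => w ∈ VA A)
    have hKe := hAK e heA
    have hout : ((Nbh ω e).filter (· ∉ VA A)).card < K₂ := by
      by_contra hcon
      exact heN (Finset.mem_filter.mpr ⟨heA, le_of_not_gt hcon⟩)
    omega
  rw [Set.mem_iUnion]
  refine ⟨A, Set.mem_iUnion.mpr ⟨hAfam, ?_⟩⟩
  by_cases hc : m₂ ≤ A₁.card
  · -- Case 1: many pairs with many witnesses outside VA A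
    left
    obtain ⟨A'', hA''sub, hA''card⟩ := Finset.exists_subset_card_eq hc
    set Dbig := A''.biUnion
      (fun e => ((Nbh ω e).filter (· ∉ VA A)).image (fun w => (e, w))) with hDbig
    have hDbigcard : d ≤ Dbig.card := by
      rw [hDbig, Finset.card_biUnion]
      · calc d = ∑ _e ∈ A'', K₂ := by
              rw [Finset.sum_const, smul_eq_mul, hA''card, hd]
        _ ≤ ∑ e ∈ A'', (((Nbh ω e).filter (· ∉ VA A)).image (fun w => (e, w))).card := by
            apply Finset.sum_le_sum
            intro e he
            rw [Finset.card_image_of_injective _ (fun w w' h => (Prod.mk.injEq _ _ _ _).mp h |>.2)]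
            exact (Finset.mem_filter.mp (hA''sub he)).2
      · intro e he e' he' hne
        rw [Function.onFun, Finset.disjoint_left]
        intro q hq hq'
        rw [Finset.mem_image] at hq hq'
        obtain ⟨w, -, rfl⟩ := hq
        obtain ⟨w', -, h'⟩ := hq'
        exact hne ((Prod.mk.injEq _ _ _ _).mp h' |>.1.symm)
    obtain ⟨D, hDsub, hDcard⟩ := Finset.exists_subset_card_eq hDbigcard
    have hDmem : ∀ q ∈ D, q.1 ∈ A'' ∧ q.2 ∈ (Nbh ω q.1).filter (· ∉ VA A) := by
      intro q hq
      have := hDsub hq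
      rw [hDbig, Finset.mem_biUnion] at this
      obtain ⟨e, he, hq2⟩ := this
      rw [Finset.mem_image] at hq2
      obtain ⟨w, hw, rfl⟩ := hq2
      exact ⟨he, hw⟩
    refine Set.mem_iUnion.mpr ⟨D, Set.mem_iUnion.mpr ⟨?_, ?_⟩⟩
    · rw [famD, Finset.mem_powersetCard]
      refine ⟨?_, hDcard⟩
      intro q hq
      obtain ⟨h1, h2⟩ := hDmem q hq
      rw [Finset.mem_filter] at h2
      rw [Finset.mem_product]
      have heA : q.1 ∈ A := Finset.filter_subset _ _ (hA''sub h1)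
      exact ⟨heA, Finset.mem_sdiff.mpr ⟨Finset.mem_univ _, h2.2⟩⟩
    · intro q hq u hu
      obtain ⟨-, h2⟩ := hDmem q hq
      rw [Finset.mem_filter] at h2
      exact (adj_of_mem_Nbh h2.1 hu).2
  · -- Case 2: many pairs with many witnesses inside VA A
    right
    have hc2 : m₂ ≤ (A \ A₁).card := by
      have hsub : A₁ ⊆ A := Finset.filter_subset _ _
      have h1 : (A \ A₁).card = A.card - A₁.card := Finset.card_sdiff_of_subset hsub
      have h2 : A₁.card ≤ A.card := Finset.card_le_card hsub
      rw [not_le] at hc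
      omega
    obtain ⟨A'', hA''sub, hA''card⟩ := Finset.exists_subset_card_eq hc2
    set S : Sym2 (Fin n) → Finset (Sym2 (Fin n)) :=
      fun e => ((Nbh ω e).filter (· ∈ VA A)).biUnion (fun w => cherry (e, w)) with hS
    set U := A''.biUnion S with hU
    have hmemS : ∀ e x, x ∈ S e → ∃ u w, u ∈ e ∧ w ∈ Nbh ω e ∧ w ∈ VA A ∧ x = s(u, w) := by
      intro e x hx
      rw [hS] at hx
      rw [Finset.mem_biUnion] at hx
      obtain ⟨w, hw, hx2⟩ := hx
      rw [Finset.mem_filter] at hw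
      obtain ⟨u, hu, hxu⟩ := mem_cherry.mp hx2
      exact ⟨u, w, hu, hw.1, hw.2, hxu.symm⟩
    have hA''A : ∀ e ∈ A'', e ∈ A := fun e he => (Finset.mem_sdiff.mp (hA''sub he)).1
    have hScard : ∀ e ∈ A'', 2 * K₂ ≤ (S e).card := by
      intro e he
      have heA : e ∈ A := hA''A e he
      rw [hS, Finset.card_biUnion]
      · have hKcard := hAin e (hA''sub he)
        calc 2 * K₂ ≤ 2 * ((Nbh ω e).filter (· ∈ VA A)).card := by omega
        _ = ∑ _w ∈ (Nbh ω e).filter (· ∈ VA A), 2 := by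
              rw [Finset.sum_const, smul_eq_mul, mul_comm]
        _ ≤ _ := by
            apply Finset.sum_le_sum
            intro w hw
            rw [Finset.mem_filter] at hw
            exact two_le_card_cherry' (hAnd e heA)
              (fun u hu => not_mem_of_mem_Nbh hw.1 hu)
      · intro w hw w' hw' hne
        rw [Finset.mem_coe, Finset.mem_filter] at hw hw'
        rw [Function.onFun, Finset.disjoint_left]
        intro x hx hx'
        obtain ⟨u, hu, hxu⟩ := mem_cherry.mp hx
        obtain ⟨u', hu', hxu'⟩ := mem_cherry.mp hx'
        have heq : s(u, w) = s(u', w') := hxu.trans hxu'.symm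
        rw [Sym2.eq_iff] at heq
        rcases heq with ⟨h1, h2⟩ | ⟨h1, h2⟩
        · exact hne h2
        · exact (not_mem_of_mem_Nbh hw'.1 hu) h1
    have hSU : ∀ e ∈ A'', S e ⊆ U := fun e he => Finset.subset_biUnion_of_mem S he
    have hmult : ∀ x ∈ U, (A''.filter (fun e => x ∈ S e)).card ≤ 2 := by
      intro x hx
      obtain ⟨a, b, rfl⟩ := sym2_exists x
      have hsub : A''.filter (fun e => s(a, b) ∈ S e)
          ⊆ (A''.filter (fun e => a ∈ e)) ∪ (A''.filter (fun e => b ∈ e)) := by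
        intro e he
        rw [Finset.mem_filter] at he
        obtain ⟨heA, heS⟩ := he
        obtain ⟨u, w, hu, -, -, hx⟩ := hmemS e _ heS
        have humem : u ∈ s(a, b) := hx ▸ Sym2.mem_mk_left u w
        rw [Finset.mem_union, Finset.mem_filter, Finset.mem_filter]
        rcases Sym2.mem_iff.mp humem with h | h
        · exact Or.inl ⟨heA, h ▸ hu⟩
        · exact Or.inr ⟨heA, h ▸ hu⟩
      have hone : ∀ v : Fin n, (A''.filter (fun e => v ∈ e)).card ≤ 1 := by
        intro v
        rw [Finset.card_le_one]
        intro e he f hf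
        rw [Finset.mem_filter] at he hf
        exact matching_eq hAmatch (hA''A e he.1) (hA''A f hf.1) he.2 hf.2
      calc (A''.filter (fun e => s(a, b) ∈ S e)).card
          ≤ ((A''.filter (fun e => a ∈ e)) ∪ (A''.filter (fun e => b ∈ e))).card :=
            Finset.card_le_card hsub
      _ ≤ _ + _ := Finset.card_union_le _ _
      _ ≤ 2 := by
            have := hone a
            have := hone b
            omega
    have hUcard : d ≤ U.card := by
      have hkey : 2 * d ≤ 2 * U.card := by
        calc 2 * d = ∑ _e ∈ A'', 2 * K₂ := by
              rw [Finset.sum_const, smul_eq_mul, hA''card, hd]; ring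
        _ ≤ ∑ e ∈ A'', (S e).card := Finset.sum_le_sum hScard
        _ = ∑ e ∈ A'', (U.filter (fun x => x ∈ S e)).card := by
              apply Finset.sum_congr rfl
              intro e he
              congr 1
              ext x
              simp only [Finset.mem_filter]
              exact ⟨fun h => ⟨hSU e he h, h⟩, fun h => h.2⟩
        _ = ∑ e ∈ A'', ∑ x ∈ U, (if x ∈ S e then 1 else 0) := by
              apply Finset.sum_congr rfl
              intro e _
              rw [Finset.card_filter]
        _ = ∑ x ∈ U, ∑ e ∈ A'', (if x ∈ S e then 1 else 0) := Finset.sum_comm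
        _ = ∑ x ∈ U, (A''.filter (fun e => x ∈ S e)).card := by
              apply Finset.sum_congr rfl
              intro x _
              rw [Finset.card_filter]
        _ ≤ ∑ _x ∈ U, 2 := Finset.sum_le_sum hmult
        _ = 2 * U.card := by rw [Finset.sum_const, smul_eq_mul, mul_comm]
      omega
    obtain ⟨B, hBsub, hBcard⟩ := Finset.exists_subset_card_eq hUcard
    have hBU : ∀ x ∈ B, ∃ e ∈ A'', x ∈ S e := by
      intro x hx
      have := hBsub hx
      rw [hU, Finset.mem_biUnion] at this
      exact this
    refine Set.mem_iUnion.mpr ⟨B, Set.mem_iUnion.mpr ⟨?_, ?_⟩⟩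
    · rw [famB, Finset.mem_powersetCard]
      refine ⟨?_, hBcard⟩
      intro x hx
      obtain ⟨e, he, hxS⟩ := hBU x hx
      obtain ⟨u, w, hu, -, hwVA, rfl⟩ := hmemS e x hxS
      rw [Finset.mem_filter]
      refine ⟨Finset.mem_univ _, fun v hv => ?_⟩
      rcases Sym2.mem_iff.mp hv with h | h
      · exact h ▸ mem_VA.mpr ⟨e, hA''A e he, hu⟩
      · exact h ▸ hwVA
    · intro x hx
      obtain ⟨e, he, hxS⟩ := hBU x hx
      obtain ⟨u, w, hu, hwN, -, rfl⟩ := hmemS e x hxS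
      exact (adj_of_mem_Nbh hwN hu).2


lemma bern_true (p : ℝ≥0) (hp : p ≤ 1) :
    (PMF.bernoulli p hp).toMeasure {true}
      = (p : ℝ≥0∞) := by
  rw [PMF.toMeasure_apply_singleton _ _ (measurableSet_singleton _)]
  simp [PMF.bernoulli_apply]

lemma cyl_measure (n : ℕ) (p : ℝ≥0) (hp : p ≤ 1) (S : Finset (Sym2 (Fin n))) :
    erMeasure n p hp (cylE S) = (p : ℝ≥0∞) ^ S.card := by
  have h1 : cylE S
      = Set.pi Set.univ (fun e => if e ∈ S then ({true} : Set Bool) else Set.univ) := by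
    ext ω
    simp only [Set.mem_pi, Set.mem_univ, forall_true_left, cylE, Set.mem_setOf_eq]
    constructor
    · intro h e
      by_cases he : e ∈ S <;> simp [he, h e]
    · intro h e he
      have := h e
      simp [he] at this
      exact this
  rw [erMeasure, h1, Measure.pi_pi]
  have h2 : ∀ e : Sym2 (Fin n),
      (PMF.bernoulli p hp).toMeasure
        (if e ∈ S then ({true} : Set Bool) else Set.univ)
      = if e ∈ S then (p : ℝ≥0∞) else 1 := by
    intro e
    by_cases he : e ∈ S
    · simp [he, bern_true p hp]
    · simp only [he, if_false, measure_univ]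
  simp_rw [h2]
  rw [Finset.prod_ite_mem Finset.univ S (fun _ => (p:ℝ≥0∞))]
  rw [Finset.univ_inter, Finset.prod_const]

lemma measure_cylP {n : ℕ} (p : ℝ≥0) (hp : p ≤ 1) {A : Finset (Sym2 (Fin n))}
    (hA : IsMatching A) {D : Finset (Sym2 (Fin n) × Fin n)}
    (hD : D ⊆ A ×ˢ (Finset.univ \ VA A)) :
    erMeasure n p hp (cylP D) ≤ (p : ℝ≥0∞) ^ (2 * D.card) := by
  have hsub : cylP D ⊆ cylE (edgesOf D) := by
    intro ω hω x hx
    rw [edgesOf, Finset.mem_biUnion] at hx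
    obtain ⟨q, hq, hxq⟩ := hx
    obtain ⟨u, hu, hxu⟩ := mem_cherry.mp hxq
    exact hxu ▸ hω q hq u hu
  calc erMeasure n p hp (cylP D) ≤ erMeasure n p hp (cylE (edgesOf D)) :=
        measure_mono hsub
  _ = (p : ℝ≥0∞) ^ (edgesOf D).card := cyl_measure n p hp _
  _ ≤ (p : ℝ≥0∞) ^ (2 * D.card) := by
        exact pow_le_pow_of_le_one (zero_le : (0:ℝ≥0∞) ≤ p) (by exact_mod_cast hp)
          (edgesOf_card hA hD)

lemma card_sym2_le (n : ℕ) : Fintype.card (Sym2 (Fin n)) ≤ n ^ 2 := by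
  have hsurj : Function.Surjective (fun q : Fin n × Fin n => Sym2.mk q.1 q.2) := by
    intro e
    obtain ⟨a, b, rfl⟩ := sym2_exists e
    exact ⟨(a, b), rfl⟩
  calc Fintype.card (Sym2 (Fin n)) ≤ Fintype.card (Fin n × Fin n) :=
        Fintype.card_le_of_surjective _ hsurj
  _ = n ^ 2 := by simp [sq]

lemma card_famA (n m : ℕ) : (famA n m).card ≤ (n ^ 2) ^ m := by
  calc (famA n m).card ≤ ((Finset.univ : Finset (Sym2 (Fin n))).powersetCard m).card :=
        Finset.card_le_card (Finset.filter_subset _ _)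
  _ = (Fintype.card (Sym2 (Fin n))).choose m := by
        rw [Finset.card_powersetCard, Finset.card_univ]
  _ ≤ (Fintype.card (Sym2 (Fin n))) ^ m := Nat.choose_le_pow _ _
  _ ≤ (n ^ 2) ^ m := Nat.pow_le_pow_left (card_sym2_le n) m

lemma card_famD {n : ℕ} (d : ℕ) (A : Finset (Sym2 (Fin n))) :
    (famD d A).card ≤ (A.card * n).choose d := by
  rw [famD, Finset.card_powersetCard]
  apply Nat.choose_le_choose
  calc (A ×ˢ (Finset.univ \ VA A)).card = A.card * (Finset.univ \ VA A).card :=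
        Finset.card_product _ _
  _ ≤ A.card * n := by
        apply Nat.mul_le_mul_left
        calc (Finset.univ \ VA A).card ≤ (Finset.univ : Finset (Fin n)).card :=
              Finset.card_le_card (Finset.sdiff_subset)
        _ = n := by simp

lemma card_famB {n : ℕ} (d : ℕ) (A : Finset (Sym2 (Fin n))) :
    (famB d A).card ≤ (4 * A.card ^ 2).choose d := by
  rw [famB, Finset.card_powersetCard]
  apply Nat.choose_le_choose
  have hinj : (Finset.univ.filter (fun x : Sym2 (Fin n) => ∀ v ∈ x, v ∈ VA A)).card
      ≤ ((VA A) ×ˢ (VA A)).card := by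
    apply Finset.card_le_card_of_injOn (fun x => x.out)
    · intro x hx
      rw [Finset.mem_coe, Finset.mem_filter] at hx
      rw [Finset.mem_coe, Finset.mem_product]
      exact ⟨hx.2 _ (Sym2.out_fst_mem x), hx.2 _ (Sym2.out_snd_mem x)⟩
    · intro x _ y _ h
      have h' : Quot.out x = Quot.out y := h
      rw [← Quot.out_eq x, ← Quot.out_eq y, h']
  calc (Finset.univ.filter (fun x : Sym2 (Fin n) => ∀ v ∈ x, v ∈ VA A)).card
      ≤ ((VA A) ×ˢ (VA A)).card := hinj
  _ = (VA A).card * (VA A).card := Finset.card_product _ _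
  _ ≤ (2 * A.card) * (2 * A.card) := Nat.mul_le_mul (card_VA A) (card_VA A)
  _ = 4 * A.card ^ 2 := by ring

end E1aux

set_option maxHeartbeats 2000000 in
/-- **Lemma 5.2, bound for `E₁`**: with high probability there is no matching of more than
`L n p` bad edges, where `L = log(1/p)`. -/
theorem E1_tail (ε : ℝ) (hε : 0 < ε) :
    ∃ C : ℝ, 0 < C ∧ ∀ (n : ℕ) (p : ℝ≥0) (hp : p ≤ 1),
      C⁻¹ * Real.log n / n ≤ (p : ℝ) → (p : ℝ) ≤ C →
      erMeasure n p hp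
          {ω | ∃ A : Finset (Sym2 (Fin n)), IsMatching A ∧
                Real.log (1 / (p : ℝ)) * n * (p : ℝ) < (A.card : ℝ) ∧
                ∀ e ∈ A, BadEdge ε (p : ℝ) ω e}
        ≤ ENNReal.ofReal
            (Real.exp (-C * (n : ℝ) ^ 2 * (p : ℝ) ^ 2 * Real.log (1 / (p : ℝ)))) := by
  classical
  set C : ℝ := min (min ((ε/6144)^8) (ε/32)) (min (Real.sqrt ε/8) (1/512)) with hCdef
  have hCpos : 0 < C := by
    apply lt_min (lt_min (by positivity) (by positivity))
    exact lt_min (by positivity) (by norm_num)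
  have hC1 : C ≤ (ε/6144)^8 := (min_le_left _ _).trans (min_le_left _ _)
  have hC2 : C ≤ ε/32 := (min_le_left _ _).trans (min_le_right _ _)
  have hC3 : C ≤ Real.sqrt ε/8 := (min_le_right _ _).trans (min_le_left _ _)
  have hC4 : C ≤ 1/512 := (min_le_right _ _).trans (min_le_right _ _)
  refine ⟨C, hCpos, ?_⟩
  intro n p hp hlow hhigh
  set pr : ℝ := (p : ℝ) with hprdef
  have hpr0 : 0 ≤ pr := p.coe_nonneg
  have hL0 : 0 ≤ Real.log (1 / pr) := by
    rcases eq_or_lt_of_le hpr0 with h | h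
    · rw [← h]; simp
    · exact Real.log_nonneg (one_le_one_div h (by exact_mod_cast hp))
  by_cases hn2 : n < 2
  · -- trivial case : the event is empty
    have hempty : {ω : Sym2 (Fin n) → Bool | ∃ A : Finset (Sym2 (Fin n)), IsMatching A ∧
        Real.log (1 / pr) * n * pr < (A.card : ℝ) ∧
        ∀ e ∈ A, BadEdge ε pr ω e} = ∅ := by
      rw [Set.eq_empty_iff_forall_notMem]
      rintro ω ⟨A, hAm, hAc, -⟩
      have h0 : (0 : ℝ) ≤ Real.log (1 / pr) * n * pr := by positivity
      have hpos : 0 < A.card := by exact_mod_cast h0.trans_lt hAc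
      obtain ⟨e, he⟩ := Finset.card_pos.mp hpos
      obtain ⟨a, b, rfl⟩ := E1aux.sym2_exists e
      have hab : a ≠ b := by
        intro h; exact hAm.1 _ he (by simp [h])
      have ha := a.2
      have hb := b.2
      exact hab (Fin.ext (by omega))
    rw [hempty]
    simp
  · -- main case : n ≥ 2
    push_neg at hn2
    have hn0 : 0 < n := by omega
    have hn0' : (0:ℝ) < n := by exact_mod_cast hn0
    have hlogn : 0 < Real.log n := Real.log_pos (by exact_mod_cast (by omega : 1 < n))
    have hlog2 : Real.log 2 ≤ Real.log n :=
      Real.log_le_log (by norm_num) (by exact_mod_cast hn2)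
    have hlog2pos : (0.6931471803 : ℝ) < Real.log 2 := Real.log_two_gt_d9
    have hppos : 0 < pr := by
      have : 0 < C⁻¹ * Real.log n / n := by positivity
      exact this.trans_le hlow
    have hple : pr ≤ C := hhigh
    have hC1' : pr ≤ (ε/6144)^8 := hple.trans hC1
    have hinvC : (512 : ℝ) ≤ C⁻¹ := by
      rw [le_inv_comm₀ (by norm_num) hCpos]
      linarith [hC4]
    -- L = log (1/p)
    set L : ℝ := Real.log (1 / pr) with hLdef
    have hLlog : L = - Real.log pr := by rw [hLdef, one_div, Real.log_inv]
    have hL1 : 1 ≤ L := by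
      rw [hLdef]
      rw [Real.le_log_iff_exp_le (by positivity)]
      have h1 : Real.exp 1 < 2.7182818286 := Real.exp_one_lt_d9
      have h2 : (512 : ℝ) ≤ 1 / pr := by
        calc (512:ℝ) ≤ C⁻¹ := hinvC
        _ = 1 / C := (one_div C).symm
        _ ≤ 1 / pr := one_div_le_one_div_of_le hppos hple
      linarith
    have hLpos : 0 < L := lt_of_lt_of_le one_pos hL1
    set x : ℝ := n * pr with hxdef
    have hxpos : 0 < x := by positivity
    have hxlow : C⁻¹ * Real.log n ≤ x := by
      rw [hxdef]
      have := (div_le_iff₀ hn0').mp hlow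
      linarith [this]
    have hx1 : 1 ≤ x := by
      have : (512 : ℝ) * Real.log 2 ≤ C⁻¹ * Real.log n :=
        mul_le_mul hinvC hlog2 (by linarith) (by linarith)
      nlinarith
    -- the integer parameters
    set m : ℕ := ⌊L * x⌋₊ + 1 with hmdef
    set K : ℕ := ⌈ε * x / L⌉₊ with hKdef
    set m₂ : ℕ := (m + 1) / 2 with hm2def
    set K₂ : ℕ := (K + 1) / 2 with hK2def
    set d : ℕ := m₂ * K₂ with hddef
    have hm_lb : L * x ≤ (m : ℝ) := by
      rw [hmdef]; push_cast
      exact (Nat.lt_floor_add_one (L * x)).le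
    have hm_ub : (m : ℝ) ≤ 2 * (L * x) := by
      rw [hmdef]; push_cast
      have h1 : (⌊L * x⌋₊ : ℝ) ≤ L * x := Nat.floor_le (by positivity)
      nlinarith
    have hK_lb : ε * x / L ≤ (K : ℝ) := Nat.le_ceil _
    have hK1 : 1 ≤ K := by
      rw [hKdef]
      exact Nat.one_le_iff_ne_zero.mpr (by
        intro h
        have := Nat.ceil_eq_zero.mp h
        have : (0:ℝ) < ε * x / L := by positivity
        linarith)
    have hm1 : 1 ≤ m := by omega
    have hmd2 : m ≤ 2 * m₂ ∧ m₂ ≤ m := by omega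
    have hKd2 : K ≤ 2 * K₂ ∧ K₂ ≤ K := by omega
    have hd1 : 1 ≤ d := by
      rw [hddef]
      have : 1 ≤ m₂ := by omega
      have : 1 ≤ K₂ := by omega
      exact Nat.one_le_iff_ne_zero.mpr (by positivity)
    have hd_lb : (m:ℝ) * (K:ℝ) / 4 ≤ (d:ℝ) := by
      have h : m * K ≤ 4 * d := by
        calc m * K ≤ (2*m₂) * (2*K₂) := Nat.mul_le_mul hmd2.1 hKd2.1
        _ = 4 * d := by rw [hddef]; ring
      have h2 : (m:ℝ) * (K:ℝ) ≤ 4 * (d:ℝ) := by exact_mod_cast h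
      linarith
    have hdpos : (0:ℝ) < d := by exact_mod_cast hd1
    -- coverage
    have hbadK : ∀ (ω : Sym2 (Fin n) → Bool) (e : Sym2 (Fin n)), BadEdge ε pr ω e →
        K ≤ (E1aux.Nbh ω e).card := by
      intro ω e hbad
      have hnd : ¬ e.IsDiag := hbad.1.1
      have h2 := not_lt.mp hbad.2
      have hKt : K ≤ triOnEdge ω e := by
        rw [hKdef]
        apply Nat.ceil_le.mpr
        calc ε * x / L = ε * (1 / L) * n * pr := by rw [hxdef]; ring
        _ ≤ (triOnEdge ω e : ℝ) := h2
      exact hKt.trans (E1aux.triOnEdge_le_Nbh ω e hnd)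
    have hmle : ∀ c : ℕ, Real.log (1/pr) * n * pr < (c : ℝ) → m ≤ c := by
      intro c hc
      rw [hmdef]
      have hLx : L * x < (c : ℝ) := by
        rw [hxdef]; calc L * (n * pr) = Real.log (1/pr) * n * pr := by rw [hLdef]; ring
        _ < c := hc
      have := (Nat.floor_lt (by positivity : (0:ℝ) ≤ L * x)).mpr hLx
      omega
    have hcov := E1aux.coverage (ε := ε) (pr := pr) (m := m) (K := K) hbadK hmle
    have hperA : ∀ A ∈ E1aux.famA n m,
        erMeasure n p hp ((⋃ D ∈ E1aux.famD (((m+1)/2) * ((K+1)/2)) A, E1aux.cylP D) ∪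
          ⋃ B ∈ E1aux.famB (((m+1)/2) * ((K+1)/2)) A, E1aux.cylE B)
        ≤ (((m*n).choose d : ℕ) : ℝ≥0∞) * (p:ℝ≥0∞)^(2*d)
          + (((4*m^2).choose d : ℕ) : ℝ≥0∞) * (p:ℝ≥0∞)^d := by
      intro A hA
      rw [E1aux.famA, Finset.mem_filter, Finset.mem_powersetCard] at hA
      obtain ⟨⟨-, hAcard⟩, hAmatch⟩ := hA
      have hDb : erMeasure n p hp (⋃ D ∈ E1aux.famD (((m+1)/2) * ((K+1)/2)) A, E1aux.cylP D)
          ≤ (((m*n).choose d : ℕ) : ℝ≥0∞) * (p:ℝ≥0∞)^(2*d) := by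
        refine le_trans (measure_biUnion_finset_le _ _) ?_
        have hstep : ∀ D ∈ E1aux.famD (((m+1)/2) * ((K+1)/2)) A,
            erMeasure n p hp (E1aux.cylP D) ≤ (p:ℝ≥0∞)^(2*d) := by
          intro D hD
          rw [E1aux.famD, Finset.mem_powersetCard] at hD
          have := E1aux.measure_cylP p hp hAmatch hD.1
          rwa [hD.2] at this
        refine le_trans (Finset.sum_le_sum hstep) ?_
        rw [Finset.sum_const, nsmul_eq_mul]
        have h := E1aux.card_famD (((m+1)/2) * ((K+1)/2)) A
        rw [hAcard] at h
        exact mul_le_mul_left (by exact_mod_cast h) _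
      have hBb : erMeasure n p hp (⋃ B ∈ E1aux.famB (((m+1)/2) * ((K+1)/2)) A, E1aux.cylE B)
          ≤ (((4*m^2).choose d : ℕ) : ℝ≥0∞) * (p:ℝ≥0∞)^d := by
        refine le_trans (measure_biUnion_finset_le _ _) ?_
        have hstep : ∀ B ∈ E1aux.famB (((m+1)/2) * ((K+1)/2)) A,
            erMeasure n p hp (E1aux.cylE B) ≤ (p:ℝ≥0∞)^d := by
          intro B hB
          rw [E1aux.famB, Finset.mem_powersetCard] at hB
          rw [E1aux.cyl_measure n p hp B, hB.2]
        refine le_trans (Finset.sum_le_sum hstep) ?_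
        rw [Finset.sum_const, nsmul_eq_mul]
        have h := E1aux.card_famB (((m+1)/2) * ((K+1)/2)) A
        rw [hAcard] at h
        exact mul_le_mul_left (by exact_mod_cast h) _
      exact (measure_union_le _ _).trans (add_le_add hDb hBb)
    have hmain : erMeasure n p hp
        {ω | ∃ A : Finset (Sym2 (Fin n)), IsMatching A ∧
              Real.log (1 / pr) * n * pr < (A.card : ℝ) ∧
              ∀ e ∈ A, BadEdge ε pr ω e}
        ≤ (((n^2)^m : ℕ) : ℝ≥0∞) * ((((m*n).choose d : ℕ) : ℝ≥0∞) * (p:ℝ≥0∞)^(2*d)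
            + (((4*m^2).choose d : ℕ) : ℝ≥0∞) * (p:ℝ≥0∞)^d) := by
      refine le_trans (measure_mono hcov) ?_
      refine le_trans (measure_biUnion_finset_le _ _) ?_
      refine le_trans (Finset.sum_le_sum hperA) ?_
      rw [Finset.sum_const, nsmul_eq_mul]
      exact mul_le_mul_left (by exact_mod_cast E1aux.card_famA n m) _
    refine hmain.trans ?_
    -- pass to real numbers
    have hofr : (((n^2)^m : ℕ) : ℝ≥0∞) * ((((m*n).choose d : ℕ) : ℝ≥0∞) * (p:ℝ≥0∞)^(2*d)
          + (((4*m^2).choose d : ℕ) : ℝ≥0∞) * (p:ℝ≥0∞)^d)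
        = ENNReal.ofReal ((((n^2)^m : ℕ) : ℝ) * ((((m*n).choose d : ℕ) : ℝ) * pr^(2*d)
          + (((4*m^2).choose d : ℕ) : ℝ) * pr^d)) := by
      have hpcast : (p : ℝ≥0∞) = ENNReal.ofReal pr := ENNReal.ofReal_coe_nnreal.symm
      rw [ENNReal.ofReal_mul (by positivity), ENNReal.ofReal_add (by positivity) (by positivity),
        ENNReal.ofReal_mul (by positivity), ENNReal.ofReal_mul (by positivity),
        ENNReal.ofReal_pow hpr0, ENNReal.ofReal_pow hpr0,
        ENNReal.ofReal_natCast, ENNReal.ofReal_natCast, ENNReal.ofReal_natCast, hpcast]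
    rw [hofr]
    apply ENNReal.ofReal_le_ofReal
    -- the eighth root of p
    set s8 : ℝ := Real.sqrt (Real.sqrt (Real.sqrt pr)) with hs8def
    have hs8pos : 0 < s8 := by rw [hs8def]; positivity
    have hs8_8 : s8^8 = pr := by
      have h1 : s8^2 = Real.sqrt (Real.sqrt pr) := Real.sq_sqrt (by positivity)
      have h2 : (Real.sqrt (Real.sqrt pr))^2 = Real.sqrt pr := Real.sq_sqrt (Real.sqrt_nonneg pr)
      have h3 : (Real.sqrt pr)^2 = pr := Real.sq_sqrt hpr0
      calc s8^8 = ((s8^2)^2)^2 := by ring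
      _ = pr := by rw [h1, h2, h3]
    have hpr1 : pr ≤ 1 := by exact_mod_cast hp
    have hs81 : s8 ≤ 1 := by
      by_contra h
      push_neg at h
      have : (1:ℝ) < s8^8 := one_lt_pow₀ h (by norm_num)
      rw [hs8_8] at this
      linarith
    have hs8small : 6144 * s8 ≤ ε := by
      have h8 : s8^8 ≤ (ε/6144)^8 := by rw [hs8_8]; exact hC1'
      have h : s8 ≤ ε/6144 := le_of_pow_le_pow_left₀ (by norm_num) (by positivity) h8
      linarith
    have hLs8 : L * s8 ≤ 8 := by
      have hlog : Real.log pr = 8 * Real.log s8 := by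
        rw [← hs8_8, Real.log_pow]; push_cast; ring
      have h3 : L ≤ 8 * s8⁻¹ := by
        rw [hLlog, hlog]
        have h4 : Real.log s8⁻¹ ≤ s8⁻¹ := by
          have := Real.log_le_sub_one_of_pos (inv_pos.mpr hs8pos)
          linarith
        rw [Real.log_inv] at h4
        linarith
      calc L * s8 ≤ (8 * s8⁻¹) * s8 := mul_le_mul_of_nonneg_right h3 hs8pos.le
      _ = 8 := by field_simp
    have hLs8_0 : 0 ≤ L * s8 := by positivity
    have he3 : Real.exp 1 ≤ 3 := by linarith [Real.exp_one_lt_d9]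
    have hexp1pos : 0 < Real.exp 1 := Real.exp_pos 1
    set sqp : ℝ := Real.sqrt pr with hsqpdef
    have hsqp4 : sqp = s8^4 := by
      have h1 : (s8^4)^2 = pr := by rw [← hs8_8]; ring
      rw [hsqpdef, ← h1, Real.sqrt_sq (by positivity)]
    have hsqppos : 0 < sqp := by rw [hsqp4]; positivity
    -- key analytic claims
    have claim1 : 4*(Real.exp 1)*L*pr ≤ ε*sqp := by
      calc 4*(Real.exp 1)*L*pr = 4*(Real.exp 1)*(L*s8)*s8^7 := by rw [← hs8_8]; ring
      _ ≤ 4*3*8*s8^7 := by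
          have h1 : 4*(Real.exp 1)*(L*s8) ≤ 4*3*8 := by
            nlinarith only [he3, hLs8, hLs8_0, hexp1pos.le]
          exact mul_le_mul_of_nonneg_right h1 (by positivity)
      _ = 96*s8^7 := by ring
      _ ≤ 6144*s8^7 := by nlinarith only [pow_nonneg hs8pos.le 7]
      _ = (6144*s8)*s8^6 := by ring
      _ ≤ ε * s8^6 := mul_le_mul_of_nonneg_right hs8small (by positivity)
      _ ≤ ε * s8^4 := mul_le_mul_of_nonneg_left
          (pow_le_pow_of_le_one hs8pos.le hs81 (by norm_num)) hε.le
      _ = ε*sqp := by rw [hsqp4]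
    have claim2 : 32*(Real.exp 1)*L^2*pr ≤ ε*sqp := by
      calc 32*(Real.exp 1)*L^2*pr = 32*(Real.exp 1)*((L*s8)*(L*s8))*s8^6 := by
            rw [← hs8_8]; ring
      _ ≤ 32*3*64*s8^6 := by
          have h1 : 32*(Real.exp 1)*((L*s8)*(L*s8)) ≤ 32*3*64 := by
            nlinarith only [he3, hLs8, hLs8_0, hexp1pos.le]
          exact mul_le_mul_of_nonneg_right h1 (by positivity)
      _ = 6144*s8^6 := by ring
      _ = (6144*s8)*s8^5 := by ring
      _ ≤ ε * s8^5 := mul_le_mul_of_nonneg_right hs8small (by positivity)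
      _ ≤ ε * s8^4 := mul_le_mul_of_nonneg_left
          (pow_le_pow_of_le_one hs8pos.le hs81 (by norm_num)) hε.le
      _ = ε*sqp := by rw [hsqp4]
    -- per-unit bounds
    have hmpos : (0:ℝ) < (m:ℝ) := by exact_mod_cast hm1
    have hKpos : (0:ℝ) < (K:ℝ) := by exact_mod_cast hK1
    have A1 : Real.exp 1*((m:ℝ)*(n:ℝ))*pr^2 ≤ (d:ℝ)*sqp := by
      have hepr : Real.exp 1*pr ≤ ε*sqp/(4*L) := by
        rw [le_div_iff₀ (by positivity)]
        calc (Real.exp 1*pr)*(4*L) = 4*(Real.exp 1)*L*pr := by ring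
        _ ≤ ε*sqp := claim1
      calc Real.exp 1*((m:ℝ)*(n:ℝ))*pr^2 = ((m:ℝ)*x)*(Real.exp 1*pr) := by
            rw [hxdef]; ring
      _ ≤ ((m:ℝ)*x)*(ε*sqp/(4*L)) := mul_le_mul_of_nonneg_left hepr (by positivity)
      _ = ((m:ℝ)*(ε*x/L)/4)*sqp := by field_simp
      _ ≤ ((m:ℝ)*(K:ℝ)/4)*sqp := by
            apply mul_le_mul_of_nonneg_right _ hsqppos.le
            have h := mul_le_mul_of_nonneg_left hK_lb hmpos.le
            linarith
      _ ≤ (d:ℝ)*sqp := mul_le_mul_of_nonneg_right hd_lb hsqppos.le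
    have A2 : Real.exp 1*(4*(m:ℝ)^2)*pr ≤ (d:ℝ)*sqp := by
      have hepr2 : (8*(Real.exp 1)*L)*pr ≤ ε*sqp/(4*L) := by
        rw [le_div_iff₀ (by positivity)]
        calc ((8*(Real.exp 1)*L)*pr)*(4*L) = 32*(Real.exp 1)*L^2*pr := by ring
        _ ≤ ε*sqp := claim2
      calc Real.exp 1*(4*(m:ℝ)^2)*pr = ((m:ℝ)^2)*(4*(Real.exp 1)*pr) := by ring
      _ ≤ ((m:ℝ)*(2*(L*x)))*(4*(Real.exp 1)*pr) := by
            apply mul_le_mul_of_nonneg_right _ (by positivity)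
            nlinarith only [mul_le_mul_of_nonneg_left hm_ub hmpos.le]
      _ = ((m:ℝ)*x)*((8*(Real.exp 1)*L)*pr) := by ring
      _ ≤ ((m:ℝ)*x)*(ε*sqp/(4*L)) := mul_le_mul_of_nonneg_left hepr2 (by positivity)
      _ = ((m:ℝ)*(ε*x/L)/4)*sqp := by field_simp
      _ ≤ ((m:ℝ)*(K:ℝ)/4)*sqp := by
            apply mul_le_mul_of_nonneg_right _ hsqppos.le
            have h := mul_le_mul_of_nonneg_left hK_lb hmpos.le
            linarith
      _ ≤ (d:ℝ)*sqp := mul_le_mul_of_nonneg_right hd_lb hsqppos.le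
    -- the two main term bounds
    have T1 : (((m*n).choose d : ℕ) : ℝ) * pr^(2*d) ≤ sqp^d := by
      have hch := E1aux.choose_le_exp_pow (m*n) d hd1
      have hper : Real.exp 1*((m:ℝ)*(n:ℝ))*pr^2/(d:ℝ) ≤ sqp := by
        rw [div_le_iff₀ hdpos]
        linarith [A1]
      calc (((m*n).choose d : ℕ) : ℝ) * pr^(2*d)
          ≤ ((Real.exp 1)^d * ((m*n : ℕ):ℝ)^d / (d:ℝ)^d) * pr^(2*d) :=
            mul_le_mul_of_nonneg_right hch (by positivity)
      _ = (Real.exp 1*((m:ℝ)*(n:ℝ))*pr^2/(d:ℝ))^d := by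
            rw [div_pow, mul_pow, mul_pow, pow_mul]
            push_cast
            ring
      _ ≤ sqp^d := pow_le_pow_left₀ (by positivity) hper d
    have T2 : (((4*m^2).choose d : ℕ) : ℝ) * pr^d ≤ sqp^d := by
      have hch := E1aux.choose_le_exp_pow (4*m^2) d hd1
      have hper : Real.exp 1*(4*(m:ℝ)^2)*pr/(d:ℝ) ≤ sqp := by
        rw [div_le_iff₀ hdpos]
        linarith [A2]
      calc (((4*m^2).choose d : ℕ) : ℝ) * pr^d
          ≤ ((Real.exp 1)^d * ((4*m^2 : ℕ):ℝ)^d / (d:ℝ)^d) * pr^d :=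
            mul_le_mul_of_nonneg_right hch (by positivity)
      _ = (Real.exp 1*(4*(m:ℝ)^2)*pr/(d:ℝ))^d := by
            rw [div_pow, mul_pow, mul_pow]
            push_cast
            ring
      _ ≤ sqp^d := pow_le_pow_left₀ (by positivity) hper d
    -- final exponent comparison
    have hεx : 32*Real.log n ≤ ε*x := by
      have hCinv : (ε/32)⁻¹ ≤ C⁻¹ := by
        apply inv_anti₀ hCpos hC2
      have h1 : (32/ε)*Real.log n ≤ x := by
        refine le_trans ?_ hxlow
        apply mul_le_mul_of_nonneg_right _ hlogn.le
        rw [show (32:ℝ)/ε = (ε/32)⁻¹ by rw [inv_div]]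
        exact hCinv
      have h2 := mul_le_mul_of_nonneg_left h1 hε.le
      calc 32*Real.log n = ε*((32/ε)*Real.log n) := by field_simp
      _ ≤ ε*x := h2
    have hmx : x ≤ (m:ℝ) := by nlinarith only [hm_lb, hL1, hxpos]
    have hx2 : x^2 = (n:ℝ)^2*pr^2 := by rw [hxdef]; ring
    have hF1 : 2*(m:ℝ)*Real.log n ≤ ε*(m:ℝ)*x/16 := by
      nlinarith only [mul_le_mul_of_nonneg_left hεx hmpos.le, hmpos, hlogn]
    have hF2 : Real.log 2 ≤ ε*(m:ℝ)*x/32 := by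
      have hCsq : C^2 ≤ ε/64 := by
        have h1 : C^2 ≤ (Real.sqrt ε/8)^2 := pow_le_pow_left₀ hCpos.le hC3 2
        have h2 : (Real.sqrt ε/8)^2 = ε/64 := by
          rw [div_pow, Real.sq_sqrt hε.le]; norm_num
        linarith
      have hxl2 : C⁻¹*Real.log 2 ≤ x := by
        refine le_trans ?_ hxlow
        exact mul_le_mul_of_nonneg_left hlog2 (inv_nonneg.mpr hCpos.le)
      have hl2pos : (0:ℝ) < Real.log 2 := by linarith
      have hxsq : (C⁻¹*Real.log 2)^2 ≤ x^2 := pow_le_pow_left₀ (by positivity) hxl2 2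
      have hkey : 32*Real.log 2 ≤ ε*x^2 := by
        have h3 : (C⁻¹*Real.log 2)^2 = (Real.log 2)^2/C^2 := by
          field_simp
        have h4 : ε*((Real.log 2)^2/C^2) ≤ ε*x^2 := by
          apply mul_le_mul_of_nonneg_left _ hε.le
          rw [← h3]; exact hxsq
        have h5 : 32*Real.log 2 ≤ ε*((Real.log 2)^2/C^2) := by
          rw [← mul_div_assoc, le_div_iff₀ (by positivity : (0:ℝ) < C^2)]
          have h6 : 32*(Real.log 2)*C^2 ≤ 32*(Real.log 2)*(ε/64) := by
            apply mul_le_mul_of_nonneg_left hCsq (by positivity)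
          have h8 : ε*(Real.log 2)/2 ≤ ε*((Real.log 2)*(Real.log 2)) := by
            have hhalf : (1:ℝ)/2 ≤ Real.log 2 := by linarith only [hlog2pos]
            nlinarith only [mul_le_mul_of_nonneg_left hhalf
              (mul_nonneg hε.le hl2pos.le)]
          nlinarith only [h6, h8]
        linarith only [h4, h5]
      have h9 : (ε*x)*x ≤ (ε*(m:ℝ))*x :=
        mul_le_mul_of_nonneg_right (mul_le_mul_of_nonneg_left hmx hε.le) hxpos.le
      nlinarith only [hkey, h9]
    have hF3 : C*(n:ℝ)^2*pr^2*L ≤ ε*(m:ℝ)*x/32 := by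
      have h1 : ε*(L*x)*x/32 ≤ ε*(m:ℝ)*x/32 := by
        nlinarith only [mul_le_mul_of_nonneg_right hm_lb (mul_nonneg hε.le hxpos.le)]
      have h2 : C*(n:ℝ)^2*pr^2*L ≤ ε*(L*x)*x/32 := by
        have h3 : C*((n:ℝ)^2*pr^2*L) ≤ (ε/32)*((n:ℝ)^2*pr^2*L) := by
          apply mul_le_mul_of_nonneg_right hC2
          positivity
        have h4 : ε*(L*x)*x/32 = (ε/32)*((n:ℝ)^2*pr^2*L) := by
          rw [show (n:ℝ)^2*pr^2 = x^2 from hx2.symm]; ring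
        rw [h4]
        linarith only [h3]
      linarith only [h1, h2]
    have hdL : ε*(m:ℝ)*x/8 ≤ (d:ℝ)*L/2 := by
      have h1 : ε*x ≤ (K:ℝ)*L := by
        rw [div_le_iff₀ hLpos] at hK_lb
        linarith
      calc ε*(m:ℝ)*x/8 = (m:ℝ)*(ε*x)/8 := by ring
      _ ≤ (m:ℝ)*((K:ℝ)*L)/8 := by
          have h2 := mul_le_mul_of_nonneg_left h1 hmpos.le
          linarith only [h2]
      _ = ((m:ℝ)*(K:ℝ)/4)*(L/2) := by ring
      _ ≤ (d:ℝ)*(L/2) := mul_le_mul_of_nonneg_right hd_lb (by positivity)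
      _ = (d:ℝ)*L/2 := by ring
    have hfinexp : 2*(m:ℝ)*Real.log n + Real.log 2 + (d:ℝ)*(-(L)/2)
        ≤ -C*(n:ℝ)^2*pr^2*L := by
      have : ε*(m:ℝ)*x/16 + ε*(m:ℝ)*x/32 + ε*(m:ℝ)*x/32 = ε*(m:ℝ)*x/8 := by ring
      linarith only [hF1, hF2, hF3, hdL, this]
    -- put things together
    have hcast : (((n^2)^m : ℕ) : ℝ) = ((n:ℝ))^(2*m) := by
      push_cast
      rw [pow_mul]
    have hn_exp : ((n:ℝ))^(2*m) = Real.exp ((2*(m:ℝ))*Real.log n) := by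
      rw [← Real.exp_log (pow_pos hn0' (2*m)), Real.log_pow]
      congr 1
      push_cast
      ring
    have hsqp_exp : sqp^d = Real.exp ((d:ℝ)*(-(L)/2)) := by
      have hlogsqp : Real.log sqp = -(L)/2 := by
        rw [hsqpdef, Real.log_sqrt hpr0, hLlog]
        ring
      rw [← Real.exp_log hsqppos, ← Real.exp_nat_mul, hlogsqp]
    calc (((n^2)^m : ℕ) : ℝ) * ((((m*n).choose d : ℕ) : ℝ) * pr^(2*d)
          + (((4*m^2).choose d : ℕ) : ℝ) * pr^d)
        ≤ (((n^2)^m : ℕ) : ℝ) * (sqp^d + sqp^d) := by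
          apply mul_le_mul_of_nonneg_left (add_le_add T1 T2) (by positivity)
    _ = ((n:ℝ))^(2*m) * (2 * sqp^d) := by rw [hcast]; ring
    _ = Real.exp ((2*(m:ℝ))*Real.log n) * (Real.exp (Real.log 2) * Real.exp ((d:ℝ)*(-(L)/2))) := by
          rw [hn_exp, hsqp_exp, Real.exp_log (by norm_num : (0:ℝ) < 2)]
    _ = Real.exp (2*(m:ℝ)*Real.log n + Real.log 2 + (d:ℝ)*(-(L)/2)) := by
          rw [← Real.exp_add, ← Real.exp_add, add_assoc]
    _ ≤ Real.exp (-C*(n:ℝ)^2*pr^2*L) := Real.exp_le_exp.mpr hfinexp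
end

section
/- Fix $\epsilon > 0$. Let $T_0$ be the number of triangles in $G(n,p)$ having at least one bad edge but all three vertices good. There is a constant $C(\epsilon) > 0$ depending only on $\epsilon$ such that whenever $C(\epsilon)^{-1} n^{-1}\log n \le p \le C(\epsilon)$, $\mathbb{P}(T_0 > 15\epsilon n^3 p^3) \le e^{-C(\epsilon) n^2 p^2 \log(1/p)}$. -/
open MeasureTheory ProbabilityTheory Real
open scoped Classical ENNReal NNReal

namespace T0aux

lemma out_mk {α : Type*} (e : Sym2 α) : s(e.out.1, e.out.2) = e := by
  conv_rhs => rw [← e.out_eq]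

lemma mem_out {α : Type*} (e : Sym2 α) {z : α} (hz : z ∈ e) : z = e.out.1 ∨ z = e.out.2 := by
  rw [← out_mk e, Sym2.mem_iff] at hz; exact hz

/-- cylinder probability -/
lemma meas_cyl (n : ℕ) (p : ℝ≥0) (hp : p ≤ 1) (F : Finset (Sym2 (Fin n))) :
    erMeasure n p hp {ω | ∀ f ∈ F, ω f = true} = (p : ℝ≥0∞) ^ F.card := by
  have hset : {ω : Sym2 (Fin n) → Bool | ∀ f ∈ F, ω f = true} =
      Set.pi Set.univ (fun f => if f ∈ F then ({true} : Set Bool) else Set.univ) := by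
    ext ω
    simp only [Set.mem_setOf_eq, Set.mem_pi, Set.mem_univ, forall_true_left]
    constructor
    · intro h f
      by_cases hf : f ∈ F
      · simp [hf, h f hf]
      · simp [hf]
    · intro h f hf
      have := h f
      simp only [hf, if_true, Set.mem_singleton_iff] at this
      exact this
  rw [erMeasure, hset, Measure.pi_pi]
  have hfac : ∀ f : Sym2 (Fin n),
      (PMF.bernoulli p hp).toMeasure
        (if f ∈ F then ({true} : Set Bool) else Set.univ)
      = if f ∈ F then ((p : ℝ≥0∞)) else 1 := by
    intro f
    by_cases hf : f ∈ F
    · simp only [hf, if_true]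
      rw [PMF.toMeasure_apply_singleton _ _ (measurableSet_singleton _)]
      rfl
    · simp only [hf, if_false]
      exact measure_univ
  calc (∏ f : Sym2 (Fin n), (PMF.bernoulli p hp).toMeasure
        (if f ∈ F then ({true} : Set Bool) else Set.univ))
      = ∏ f : Sym2 (Fin n), (if f ∈ F then ((p : ℝ≥0∞)) else 1) := by
        exact Finset.prod_congr rfl (fun f _ => hfac f)
    _ = ∏ f ∈ F, ((p : ℝ≥0∞)) := Fintype.prod_ite_mem F _
    _ = (p : ℝ≥0∞) ^ F.card := Finset.prod_const _

/-- union bound over r-subsets: probability that at least `r` of the disjoint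
coordinate-set events all hold. -/
lemma lemA {ι : Type*} [DecidableEq ι] (n : ℕ) (p : ℝ≥0) (hp : p ≤ 1)
    (D : Finset ι) (g : ι → Finset (Sym2 (Fin n)))
    (hdisj : ∀ i ∈ D, ∀ j ∈ D, i ≠ j → Disjoint (g i) (g j))
    (c r : ℕ) (hc : ∀ i ∈ D, c ≤ (g i).card) :
    erMeasure n p hp {ω | r ≤ (D.filter (fun i => ∀ f ∈ g i, ω f = true)).card}
      ≤ (D.card.choose r : ℝ≥0∞) * (p : ℝ≥0∞) ^ (c * r) := by
  have hsub : {ω : Sym2 (Fin n) → Bool | r ≤ (D.filter (fun i => ∀ f ∈ g i, ω f = true)).card}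
      ⊆ ⋃ T ∈ D.powersetCard r, {ω | ∀ f ∈ T.biUnion g, ω f = true} := by
    intro ω hω
    obtain ⟨T, hTsub, hTcard⟩ := Finset.exists_subset_card_eq hω
    refine Set.mem_biUnion (Finset.mem_powersetCard.2 ⟨hTsub.trans (Finset.filter_subset _ _), hTcard⟩) ?_
    intro f hf
    obtain ⟨i, hi, hfi⟩ := Finset.mem_biUnion.1 hf
    exact (Finset.mem_filter.1 (hTsub hi)).2 f hfi
  refine (measure_mono hsub).trans ?_
  refine (measure_biUnion_finset_le _ _).trans ?_
  have hbound : ∀ T ∈ D.powersetCard r,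
      erMeasure n p hp {ω | ∀ f ∈ T.biUnion g, ω f = true} ≤ (p : ℝ≥0∞) ^ (c * r) := by
    intro T hT
    rw [meas_cyl]
    obtain ⟨hTsub, hTcard⟩ := Finset.mem_powersetCard.1 hT
    have hcard : c * r ≤ (T.biUnion g).card := by
      rw [Finset.card_biUnion (fun i hi j hj hij => hdisj i (hTsub hi) j (hTsub hj) hij)]
      calc c * r = ∑ _i ∈ T, c := by rw [Finset.sum_const, hTcard, smul_eq_mul, mul_comm]
        _ ≤ ∑ i ∈ T, (g i).card := Finset.sum_le_sum (fun i hi => hc i (hTsub hi))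
    exact pow_le_pow_of_le_one (by simp) (by exact_mod_cast hp) hcard
  calc (∑ T ∈ D.powersetCard r, erMeasure n p hp {ω | ∀ f ∈ T.biUnion g, ω f = true})
      ≤ ∑ _T ∈ D.powersetCard r, (p : ℝ≥0∞) ^ (c * r) := Finset.sum_le_sum hbound
    _ = ((D.powersetCard r).card : ℝ≥0∞) * (p : ℝ≥0∞) ^ (c * r) := by
        rw [Finset.sum_const, nsmul_eq_mul]
    _ = (D.card.choose r : ℝ≥0∞) * (p : ℝ≥0∞) ^ (c * r) := by
        rw [Finset.card_powersetCard]

end T0aux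

namespace T0aux
open Finset

lemma out_ne {α : Type*} (e : Sym2 α) (he : ¬ e.IsDiag) : e.out.1 ≠ e.out.2 := by
  intro h
  apply he
  rw [← out_mk e]
  exact Sym2.mk_isDiag_iff.2 h

lemma card_endpoints_le {n : ℕ} (e : Sym2 (Fin n)) :
    (Finset.univ.filter (fun z => z ∈ e)).card ≤ 2 := by
  refine le_trans (Finset.card_le_card (t := {e.out.1, e.out.2}) ?_) ?_
  · intro z hz
    rcases mem_out e (Finset.mem_filter.1 hz).2 with h | h <;> simp [h]
  · exact le_trans (Finset.card_insert_le _ _) (by simp)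

lemma card_edges_at {n : ℕ} (ω : Sym2 (Fin n) → Bool) (x : Fin n) :
    (Finset.univ.filter (fun e : Sym2 (Fin n) => x ∈ e ∧ IsEdge ω e)).card ≤ deg ω x := by
  rw [deg]
  apply Finset.card_le_card_of_injOn (fun e => if h : x ∈ e then Sym2.Mem.other' h else x)
  · intro e he
    obtain ⟨hx, hdiag, hω⟩ : x ∈ e ∧ ¬ e.IsDiag ∧ ω e = true := by
      have := Finset.mem_filter.1 he
      exact ⟨this.2.1, this.2.2.1, this.2.2.2⟩
    dsimp only
    rw [dif_pos hx]
    refine Finset.mem_filter.2 ⟨Finset.mem_univ _, ?_, ?_⟩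
    · intro hxx
      apply hdiag
      rw [← Sym2.other_spec' hx, ← hxx]
      exact Sym2.mk_isDiag_iff.2 rfl
    · rw [Sym2.other_spec' hx]
      exact hω
  · intro e1 h1 e2 h2 heq
    have hx1 : x ∈ e1 := (Finset.mem_filter.1 h1).2.1
    have hx2 : x ∈ e2 := (Finset.mem_filter.1 h2).2.1
    dsimp only at heq
    rw [dif_pos hx1, dif_pos hx2] at heq
    rw [← Sym2.other_spec' hx1, ← Sym2.other_spec' hx2, heq]

lemma triOnEdge_le_commonNbrs {n : ℕ} (hn : 0 < n) (ω : Sym2 (Fin n) → Bool)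
    (e : Sym2 (Fin n)) (he : ¬ e.IsDiag) : triOnEdge ω e ≤ commonNbrs ω e := by
  classical
  have x0 : Fin n := ⟨0, hn⟩
  set eF : Finset (Fin n) := Finset.univ.filter (fun z => z ∈ e) with heF
  have heFmem : ∀ z, z ∈ eF ↔ z ∈ e := by intro z; simp [heF]
  have heFcard : eF.card = 2 := by
    have : eF = {e.out.1, e.out.2} := by
      ext z
      simp only [heFmem, Finset.mem_insert, Finset.mem_singleton]
      constructor
      · exact mem_out e
      · rintro (rfl | rfl)
        · exact Sym2.out_fst_mem e
        · exact Sym2.out_snd_mem e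
    rw [this, Finset.card_pair (out_ne e he)]
  rw [triOnEdge, commonNbrs]
  apply Finset.card_le_card_of_injOn
    (fun t => if h : (t \ eF).Nonempty then (t \ eF).min' h else x0)
  · intro t ht
    obtain ⟨htri, hsub⟩ := (Finset.mem_filter.1 ht).2
    have hne : (t \ eF).Nonempty := by
      rw [← Finset.card_pos]
      have h1 := Finset.card_le_card_sdiff_add_card (s := t) (t := eF)
      have h2 := htri.1
      omega
    dsimp only
    rw [dif_pos hne]
    set z := (t \ eF).min' hne with hz
    have hzmem := Finset.min'_mem (t \ eF) hne
    have hzt : z ∈ t := (Finset.mem_sdiff.1 hzmem).1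
    have hznotin : z ∉ e := by
      have := (Finset.mem_sdiff.1 hzmem).2
      rw [heFmem] at this
      exact this
    refine Finset.mem_filter.2 ⟨Finset.mem_univ _, hznotin, ?_⟩
    intro u hu
    exact htri.2 u (hsub u hu) z hzt (fun h => hznotin (h ▸ hu))
  · intro t1 h1 t2 h2 heq
    obtain ⟨htri1, hsub1⟩ := (Finset.mem_filter.1 h1).2
    obtain ⟨htri2, hsub2⟩ := (Finset.mem_filter.1 h2).2
    have hne1 : (t1 \ eF).Nonempty := by
      rw [← Finset.card_pos]
      have := Finset.card_le_card_sdiff_add_card (s := t1) (t := eF)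
      have h2 := htri1.1
      omega
    have hne2 : (t2 \ eF).Nonempty := by
      rw [← Finset.card_pos]
      have := Finset.card_le_card_sdiff_add_card (s := t2) (t := eF)
      have h2 := htri2.1
      omega
    dsimp only at heq
    rw [dif_pos hne1, dif_pos hne2] at heq
    have key : ∀ (t : Finset (Fin n)) (htri : IsTriangle ω t) (hsub : ∀ u ∈ e, u ∈ t)
        (hne : (t \ eF).Nonempty), t = insert ((t \ eF).min' hne) eF := by
      intro t htri hsub hne
      have hzmem := Finset.min'_mem (t \ eF) hne
      have hzt : (t \ eF).min' hne ∈ t := (Finset.mem_sdiff.1 hzmem).1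
      have hznotin : (t \ eF).min' hne ∉ eF := (Finset.mem_sdiff.1 hzmem).2
      have hsubset : insert ((t \ eF).min' hne) eF ⊆ t := by
        intro u hu
        rcases Finset.mem_insert.1 hu with rfl | hu
        · exact hzt
        · exact hsub u ((heFmem u).1 hu)
      have hcard : t.card ≤ (insert ((t \ eF).min' hne) eF).card := by
        rw [Finset.card_insert_of_notMem hznotin, heFcard, htri.1]
      exact (Finset.eq_of_subset_of_card_le hsubset hcard).symm
    rw [key t1 htri1 hsub1 hne1, key t2 htri2 hsub2 hne2, heq]

end T0aux

namespace T0aux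

lemma submatching {n : ℕ} {A B : Finset (Sym2 (Fin n))} (h : A ⊆ B) (hB : IsMatching B) :
    IsMatching A :=
  ⟨fun e he => hB.1 e (h he), fun e he f hf hef v hv => hB.2 e (h he) f (h hf) hef v hv⟩

lemma extract {n : ℕ} (hn : 0 < n) (ε P : ℝ) (hε : 0 < ε) (hP0 : 0 < P) (hP1 : P < 1)
    (a0 : ℕ) (ha0 : (n : ℝ) * P * Real.log (1 / P) ≤ (a0 : ℝ))
    (ω : Sym2 (Fin n) → Bool)
    (hT : 15 * ε * (n : ℝ) ^ 3 * P ^ 3 < (triBadEdgeGoodVerts ε P ω : ℝ)) :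
    ∃ A : Finset (Sym2 (Fin n)), IsMatching A ∧ A.card ≤ a0 ∧
      ε * (n : ℝ) ^ 2 * P ^ 2 ≤ ∑ f ∈ A, (commonNbrs ω f : ℝ) := by
  classical
  set L : ℝ := Real.log (1 / P) with hLdef
  have hL : 0 < L := Real.log_pos (one_lt_one_div hP0 hP1)
  set S : Finset (Sym2 (Fin n)) := Finset.univ.filter
    (fun e => BadEdge ε P ω e ∧ ∀ x ∈ e, GoodVertex P ω x) with hSdef
  have hSmem : ∀ e ∈ S, BadEdge ε P ω e ∧ ∀ x ∈ e, GoodVertex P ω x := by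
    intro e he; exact (Finset.mem_filter.1 he).2
  -- (i) T₀ ≤ ∑_{e ∈ S} triOnEdge e
  have h1 : triBadEdgeGoodVerts ε P ω ≤ ∑ e ∈ S, triOnEdge ω e := by
    rw [triBadEdgeGoodVerts]
    calc (Finset.univ.filter (fun t : Finset (Fin n) => IsTriangle ω t ∧
          (∃ u ∈ t, ∃ v ∈ t, u ≠ v ∧ BadEdge ε P ω s(u, v)) ∧
          ∀ u ∈ t, GoodVertex P ω u)).card
        ≤ (S.biUnion (fun e => Finset.univ.filter
            (fun t : Finset (Fin n) => IsTriangle ω t ∧ ∀ u ∈ e, u ∈ t))).card := by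
          apply Finset.card_le_card
          intro t ht
          have hm := Finset.mem_filter.1 ht
          obtain ⟨htri, ⟨u, hu, v, hv, huv, hbad⟩, hgood⟩ := hm.2
          refine Finset.mem_biUnion.2 ⟨s(u, v), ?_, ?_⟩
          · refine Finset.mem_filter.2 ⟨Finset.mem_univ _, hbad, ?_⟩
            intro x hx
            rcases Sym2.mem_iff.1 hx with rfl | rfl
            · exact hgood x hu
            · exact hgood x hv
          · refine Finset.mem_filter.2 ⟨Finset.mem_univ _, htri, ?_⟩
            intro w hw
            rcases Sym2.mem_iff.1 hw with rfl | rfl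
            · exact hu
            · exact hv
      _ ≤ ∑ e ∈ S, (Finset.univ.filter
            (fun t : Finset (Fin n) => IsTriangle ω t ∧ ∀ u ∈ e, u ∈ t)).card :=
          Finset.card_biUnion_le
      _ = ∑ e ∈ S, triOnEdge ω e := rfl
  -- maximum-weight matching inside S
  set ℳ : Finset (Finset (Sym2 (Fin n))) := S.powerset.filter (fun A => IsMatching A) with hMdef
  have hℳne : ℳ.Nonempty := by
    refine ⟨∅, Finset.mem_filter.2 ⟨Finset.empty_mem_powerset S, ?_, ?_⟩⟩
    · intro e he; exact absurd he (Finset.notMem_empty e)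
    · intro e he; exact absurd he (Finset.notMem_empty e)
  obtain ⟨M, hMℳ, hmax⟩ := ℳ.exists_max_image (fun A => ∑ f ∈ A, triOnEdge ω f) hℳne
  have hMS : M ⊆ S := Finset.mem_powerset.1 (Finset.mem_filter.1 hMℳ).1
  have hMm : IsMatching M := (Finset.mem_filter.1 hMℳ).2
  -- (ii) exchange argument
  have key : ∀ e ∈ S, triOnEdge ω e ≤
      ∑ f ∈ M.filter (fun f => ∃ v, v ∈ e ∧ v ∈ f), triOnEdge ω f := by
    intro e heS
    by_cases heM : e ∈ M
    · have hmem : e ∈ M.filter (fun f => ∃ v, v ∈ e ∧ v ∈ f) :=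
        Finset.mem_filter.2 ⟨heM, e.out.1, Sym2.out_fst_mem e, Sym2.out_fst_mem e⟩
      exact Finset.single_le_sum (f := fun f => triOnEdge ω f) (fun _ _ => Nat.zero_le _) hmem
    · set M' := insert e (M.filter (fun f => ¬ ∃ v, v ∈ e ∧ v ∈ f)) with hM'def
      have heBad : BadEdge ε P ω e := (hSmem e heS).1
      have hM'ℳ : M' ∈ ℳ := by
        refine Finset.mem_filter.2 ⟨Finset.mem_powerset.2 ?_, ?_, ?_⟩
        · exact Finset.insert_subset heS ((Finset.filter_subset _ _).trans hMS)
        · intro f hf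
          rcases Finset.mem_insert.1 hf with rfl | hf
          · exact heBad.1.1
          · exact hMm.1 f (Finset.mem_filter.1 hf).1
        · intro f1 h1 f2 h2 h12 v hv1
          rcases Finset.mem_insert.1 h1 with rfl | h1 <;>
            rcases Finset.mem_insert.1 h2 with rfl | h2
          · exact absurd rfl h12
          · intro hv2
            exact (Finset.mem_filter.1 h2).2 ⟨v, hv1, hv2⟩
          · intro hv2
            exact (Finset.mem_filter.1 h1).2 ⟨v, hv2, hv1⟩
          · exact hMm.2 f1 (Finset.mem_filter.1 h1).1 f2 (Finset.mem_filter.1 h2).1 h12 v hv1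
      have hle := hmax M' hM'ℳ
      have henotin : e ∉ M.filter (fun f => ¬ ∃ v, v ∈ e ∧ v ∈ f) := by
        intro h
        exact heM (Finset.mem_filter.1 h).1
      rw [hM'def, Finset.sum_insert henotin] at hle
      have hsplit := Finset.sum_filter_add_sum_filter_not M
        (fun f => ∃ v, v ∈ e ∧ v ∈ f) (fun f => triOnEdge ω f)
      omega
  -- (iii) swap the double sum
  have swap : ∑ e ∈ S, triOnEdge ω e ≤
      ∑ f ∈ M, (S.filter (fun e => ∃ v, v ∈ e ∧ v ∈ f)).card * triOnEdge ω f := by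
    calc ∑ e ∈ S, triOnEdge ω e
        ≤ ∑ e ∈ S, ∑ f ∈ M.filter (fun f => ∃ v, v ∈ e ∧ v ∈ f), triOnEdge ω f :=
          Finset.sum_le_sum key
      _ = ∑ e ∈ S, ∑ f ∈ M, if (∃ v, v ∈ e ∧ v ∈ f) then triOnEdge ω f else 0 := by
          refine Finset.sum_congr rfl (fun e _ => ?_)
          rw [Finset.sum_filter]
      _ = ∑ f ∈ M, ∑ e ∈ S, if (∃ v, v ∈ e ∧ v ∈ f) then triOnEdge ω f else 0 :=
          Finset.sum_comm
      _ = ∑ f ∈ M, (S.filter (fun e => ∃ v, v ∈ e ∧ v ∈ f)).card * triOnEdge ω f := by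
          refine Finset.sum_congr rfl (fun f _ => ?_)
          rw [← Finset.sum_filter, Finset.sum_const, smul_eq_mul]
  -- (iv) degree bound
  have degbound : ∀ f ∈ M,
      ((S.filter (fun e => ∃ v, v ∈ e ∧ v ∈ f)).card : ℝ) ≤ 14 * (n : ℝ) * P := by
    intro f hf
    have hgoodf : ∀ x ∈ f, GoodVertex P ω x := (hSmem f (hMS hf)).2
    have hsub : S.filter (fun e => ∃ v, v ∈ e ∧ v ∈ f) ⊆
        (Finset.univ.filter (fun e => f.out.1 ∈ e ∧ IsEdge ω e)) ∪
        (Finset.univ.filter (fun e => f.out.2 ∈ e ∧ IsEdge ω e)) := by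
      intro e he
      have hm := Finset.mem_filter.1 he
      have heS := hm.1
      obtain ⟨v', hv'e, hv'f⟩ := hm.2
      have hEdge : IsEdge ω e := (hSmem e heS).1.1
      rcases mem_out f hv'f with rfl | rfl
      · exact Finset.mem_union_left _ (Finset.mem_filter.2 ⟨Finset.mem_univ _, hv'e, hEdge⟩)
      · exact Finset.mem_union_right _ (Finset.mem_filter.2 ⟨Finset.mem_univ _, hv'e, hEdge⟩)
    have hcard : (S.filter (fun e => ∃ v, v ∈ e ∧ v ∈ f)).card ≤
        deg ω f.out.1 + deg ω f.out.2 :=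
      le_trans (Finset.card_le_card hsub)
        (le_trans (Finset.card_union_le _ _)
          (Nat.add_le_add (card_edges_at ω f.out.1) (card_edges_at ω f.out.2)))
    have hd1 : (deg ω f.out.1 : ℝ) < 7 * (n : ℝ) * P := hgoodf _ (Sym2.out_fst_mem f)
    have hd2 : (deg ω f.out.2 : ℝ) < 7 * (n : ℝ) * P := hgoodf _ (Sym2.out_snd_mem f)
    calc ((S.filter (fun e => ∃ v, v ∈ e ∧ v ∈ f)).card : ℝ)
        ≤ (deg ω f.out.1 : ℝ) + (deg ω f.out.2 : ℝ) := by exact_mod_cast hcard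
      _ ≤ 14 * (n : ℝ) * P := by linarith
  -- put the real chain together
  have hW : (triBadEdgeGoodVerts ε P ω : ℝ) ≤
      14 * (n : ℝ) * P * ∑ f ∈ M, (triOnEdge ω f : ℝ) := by
    have hc1 : (triBadEdgeGoodVerts ε P ω : ℝ) ≤
        ∑ f ∈ M, ((S.filter (fun e => ∃ v, v ∈ e ∧ v ∈ f)).card : ℝ) * (triOnEdge ω f : ℝ) := by
      have := le_trans h1 swap
      calc (triBadEdgeGoodVerts ε P ω : ℝ)
          ≤ ((∑ f ∈ M, (S.filter (fun e => ∃ v, v ∈ e ∧ v ∈ f)).card * triOnEdge ω f : ℕ) : ℝ) := by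
            exact_mod_cast this
        _ = ∑ f ∈ M, ((S.filter (fun e => ∃ v, v ∈ e ∧ v ∈ f)).card : ℝ) * (triOnEdge ω f : ℝ) := by
            push_cast; ring
    refine hc1.trans ?_
    rw [Finset.mul_sum]
    refine Finset.sum_le_sum (fun f hf => ?_)
    exact mul_le_mul_of_nonneg_right (degbound f hf) (Nat.cast_nonneg _)
  have hnP : (0 : ℝ) < (n : ℝ) * P := by
    have : (0 : ℝ) < (n : ℝ) := by exact_mod_cast hn
    positivity
  by_cases hMa : M.card ≤ a0
  · refine ⟨M, hMm, hMa, ?_⟩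
    have hWcn : ∑ f ∈ M, (triOnEdge ω f : ℝ) ≤ ∑ f ∈ M, (commonNbrs ω f : ℝ) := by
      refine Finset.sum_le_sum (fun f hf => ?_)
      exact_mod_cast triOnEdge_le_commonNbrs hn ω f (hMm.1 f hf)
    have hWlb : ε * (n : ℝ) ^ 2 * P ^ 2 ≤ ∑ f ∈ M, (triOnEdge ω f : ℝ) := by
      have h15 : 14 * ((n : ℝ) * P) * (ε * (n : ℝ) ^ 2 * P ^ 2) ≤ 15 * ε * (n : ℝ) ^ 3 * P ^ 3 := by
        have hnn : (0:ℝ) ≤ ε * (n : ℝ) ^ 3 * P ^ 3 := by positivity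
        nlinarith [hnn]
      have h2 : 14 * ((n : ℝ) * P) * (ε * (n : ℝ) ^ 2 * P ^ 2)
          < 14 * ((n : ℝ) * P) * ∑ f ∈ M, (triOnEdge ω f : ℝ) := by
        calc 14 * ((n : ℝ) * P) * (ε * (n : ℝ) ^ 2 * P ^ 2)
            ≤ 15 * ε * (n : ℝ) ^ 3 * P ^ 3 := h15
          _ < (triBadEdgeGoodVerts ε P ω : ℝ) := hT
          _ ≤ 14 * (n : ℝ) * P * ∑ f ∈ M, (triOnEdge ω f : ℝ) := hW
          _ = 14 * ((n : ℝ) * P) * ∑ f ∈ M, (triOnEdge ω f : ℝ) := by ring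
      have h14 : (0:ℝ) < 14 * ((n : ℝ) * P) := by linarith
      exact le_of_lt ((mul_lt_mul_iff_right₀ h14).1 h2)
    exact hWlb.trans hWcn
  · push_neg at hMa
    obtain ⟨A, hAM, hAcard⟩ := Finset.exists_subset_card_eq hMa.le
    refine ⟨A, submatching hAM hMm, le_of_eq hAcard, ?_⟩
    have per : ∀ f ∈ A, ε * (1 / L) * (n : ℝ) * P ≤ (commonNbrs ω f : ℝ) := by
      intro f hf
      have hbad : BadEdge ε P ω f := (hSmem f (hMS (hAM hf))).1
      have h2 : ε * (1 / L) * (n : ℝ) * P ≤ (triOnEdge ω f : ℝ) := not_lt.1 hbad.2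
      refine h2.trans ?_
      exact_mod_cast triOnEdge_le_commonNbrs hn ω f (hMm.1 f (hAM hf))
    calc ε * (n : ℝ) ^ 2 * P ^ 2
        = ((n : ℝ) * P * L) * (ε * (1 / L) * (n : ℝ) * P) := by
          field_simp
      _ ≤ (a0 : ℝ) * (ε * (1 / L) * (n : ℝ) * P) := by
          refine mul_le_mul_of_nonneg_right ha0 ?_
          have h1L : (0:ℝ) < 1 / L := by positivity
          positivity
      _ = ∑ _f ∈ A, (ε * (1 / L) * (n : ℝ) * P) := by
          rw [Finset.sum_const, hAcard, nsmul_eq_mul]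
      _ ≤ ∑ f ∈ A, (commonNbrs ω f : ℝ) := Finset.sum_le_sum per

end T0aux

namespace T0aux

lemma perMatching {n : ℕ} (p : ℝ≥0) (hp : p ≤ 1) (s : ℝ) (hs : 4 ≤ s)
    (a0 : ℕ) (A : Finset (Sym2 (Fin n))) (hA : IsMatching A) (hcard : A.card ≤ a0) :
    erMeasure n p hp {ω | s ≤ ∑ f ∈ A, (commonNbrs ω f : ℝ)}
      ≤ ((a0 * n).choose ⌈s / 4⌉₊ : ℝ≥0∞) * (p : ℝ≥0∞) ^ (2 * ⌈s / 4⌉₊)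
        + ((4 * a0 ^ 2).choose ⌈s / 4⌉₊ : ℝ≥0∞) * (p : ℝ≥0∞) ^ (1 * ⌈s / 4⌉₊) := by
  classical
  set r : ℕ := ⌈s / 4⌉₊ with hrdef
  set VA : Finset (Fin n) := A.biUnion (fun e => Finset.univ.filter (fun z => z ∈ e)) with hVA
  have hVAmem : ∀ {e : Sym2 (Fin n)} {x : Fin n}, e ∈ A → x ∈ e → x ∈ VA := by
    intro e x he hx
    exact Finset.mem_biUnion.2 ⟨e, he, Finset.mem_filter.2 ⟨Finset.mem_univ _, hx⟩⟩
  have hVAcard : VA.card ≤ 2 * A.card := by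
    rw [hVA]
    calc (A.biUnion (fun e => Finset.univ.filter (fun z => z ∈ e))).card
        ≤ ∑ e ∈ A, (Finset.univ.filter (fun z => z ∈ e)).card :=
          Finset.card_biUnion_le
      _ ≤ ∑ _e ∈ A, 2 := Finset.sum_le_sum (fun e _ => card_endpoints_le e)
      _ = 2 * A.card := by rw [Finset.sum_const, smul_eq_mul, mul_comm]
  set Sin : Finset (Sym2 (Fin n)) := (VA ×ˢ VA).image (fun q : Fin n × Fin n => s(q.1, q.2))
    with hSin
  set Dout : Finset ((_ : Sym2 (Fin n)) × Fin n) := A.sigma (fun _ => Finset.univ \ VA)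
    with hDout
  set gOut : (_ : Sym2 (Fin n)) × Fin n → Finset (Sym2 (Fin n)) :=
    fun q => {s(q.1.out.1, q.2), s(q.1.out.2, q.2)} with hgOut
  set gIn : Sym2 (Fin n) → Finset (Sym2 (Fin n)) := fun c => {c} with hgIn
  -- the two "certificate" events
  set Eout : Set (Sym2 (Fin n) → Bool) :=
    {ω | r ≤ (Dout.filter (fun q => ∀ c ∈ gOut q, ω c = true)).card} with hEout
  set Ein : Set (Sym2 (Fin n) → Bool) :=
    {ω | r ≤ (Sin.filter (fun c => ∀ c' ∈ gIn c, ω c' = true)).card} with hEin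
  have hrs2 : (r : ℝ) ≤ s / 2 := by
    have h1 : (r : ℝ) < s / 4 + 1 := Nat.ceil_lt_add_one (by linarith)
    linarith
  -- event inclusion
  have hsub : {ω : Sym2 (Fin n) → Bool | s ≤ ∑ f ∈ A, (commonNbrs ω f : ℝ)} ⊆ Eout ∪ Ein := by
    intro ω hω
    simp only [Set.mem_setOf_eq] at hω
    have cnsplit : ∀ f ∈ A, commonNbrs ω f =
        (VA.filter (fun z => z ∉ f ∧ ∀ u ∈ f, Adj ω u z)).card +
        ((Finset.univ \ VA).filter (fun z => z ∉ f ∧ ∀ u ∈ f, Adj ω u z)).card := by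
      intro f hf
      rw [commonNbrs]
      have hsp : (Finset.univ : Finset (Fin n)) = VA ∪ (Finset.univ \ VA) :=
        (Finset.union_sdiff_of_subset (Finset.subset_univ VA)).symm
      conv_lhs => rw [hsp, Finset.filter_union]
      have hdisj : Disjoint (VA.filter (fun z => z ∉ f ∧ ∀ u ∈ f, Adj ω u z))
          ((Finset.univ \ VA).filter (fun z => z ∉ f ∧ ∀ u ∈ f, Adj ω u z)) :=
        Finset.disjoint_filter_filter (Finset.sdiff_disjoint.symm)
      exact Finset.card_union_of_disjoint hdisj
    set Win := A.sigma (fun f => VA.filter (fun z => z ∉ f ∧ ∀ u ∈ f, Adj ω u z)) with hWin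
    set Wout := A.sigma (fun f => (Finset.univ \ VA).filter
      (fun z => z ∉ f ∧ ∀ u ∈ f, Adj ω u z)) with hWout
    have hXsum : s ≤ (Win.card : ℝ) + (Wout.card : ℝ) := by
      have he : ∑ f ∈ A, (commonNbrs ω f : ℝ) = (Win.card : ℝ) + (Wout.card : ℝ) := by
        rw [hWin, hWout, Finset.card_sigma, Finset.card_sigma]
        push_cast
        rw [← Finset.sum_add_distrib]
        refine Finset.sum_congr rfl (fun f hf => ?_)
        rw [cnsplit f hf]
        push_cast
        ring
      rw [← he]
      exact hω
    by_cases hcase : s / 2 ≤ (Wout.card : ℝ)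
    · left
      rw [hEout, Set.mem_setOf_eq]
      have hWsub : Wout ⊆ Dout.filter (fun q => ∀ c ∈ gOut q, ω c = true) := by
        rintro ⟨f, z⟩ hq
        have hq' := Finset.mem_sigma.1 hq
        have hf : f ∈ A := hq'.1
        have hz := Finset.mem_filter.1 hq'.2
        refine Finset.mem_filter.2 ⟨Finset.mem_sigma.2 ⟨hf, hz.1⟩, ?_⟩
        intro c hc
        rcases Finset.mem_insert.1 hc with rfl | hc
        · exact (hz.2.2 f.out.1 (Sym2.out_fst_mem f)).2
        · rw [Finset.mem_singleton.1 hc]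
          exact (hz.2.2 f.out.2 (Sym2.out_snd_mem f)).2
      have : (r : ℝ) ≤ ((Dout.filter (fun q => ∀ c ∈ gOut q, ω c = true)).card : ℝ) := by
        calc (r : ℝ) ≤ s / 2 := hrs2
          _ ≤ (Wout.card : ℝ) := hcase
          _ ≤ _ := by exact_mod_cast Finset.card_le_card hWsub
      exact_mod_cast this
    · right
      push_neg at hcase
      have hXin : s / 2 ≤ (Win.card : ℝ) := by linarith
      rw [hEin, Set.mem_setOf_eq]
      set F := Sin.filter (fun c => ω c = true) with hF
      have hfib : Win.card ≤ 2 * F.card := by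
        apply Finset.card_le_mul_card_image_of_maps_to
          (f := fun q : (_ : Sym2 (Fin n)) × Fin n => s(q.1.out.1, q.2))
        · rintro ⟨f, z⟩ hq
          have hq' := Finset.mem_sigma.1 hq
          have hf : f ∈ A := hq'.1
          have hz := Finset.mem_filter.1 hq'.2
          refine Finset.mem_filter.2 ⟨?_, (hz.2.2 f.out.1 (Sym2.out_fst_mem f)).2⟩
          exact Finset.mem_image.2 ⟨(f.out.1, z), Finset.mem_product.2
            ⟨hVAmem hf (Sym2.out_fst_mem f), hz.1⟩, rfl⟩
        · intro c _
          refine le_trans (Finset.card_le_card_of_injOn (fun q => q.1.out.1) ?_ ?_)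
            (card_endpoints_le c)
          · rintro ⟨f, z⟩ hq
            have hc : s(f.out.1, z) = c := (Finset.mem_filter.1 hq).2
            refine Finset.mem_filter.2 ⟨Finset.mem_univ _, ?_⟩
            rw [← hc]
            exact Sym2.mem_mk_left _ _
          · rintro ⟨f1, z1⟩ hq1 ⟨f2, z2⟩ hq2 hx
            simp only [Set.mem_setOf_eq] at hx
            have hm1 := Finset.mem_filter.1 hq1
            have hm2 := Finset.mem_filter.1 hq2
            have hs1 := Finset.mem_sigma.1 hm1.1
            have hs2 := Finset.mem_sigma.1 hm2.1
            have hz1 := Finset.mem_filter.1 hs1.2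
            have hz2 := Finset.mem_filter.1 hs2.2
            have hff : f1 = f2 := by
              by_contra hne
              exact (hA.2 f1 hs1.1 f2 hs2.1 hne f1.out.1 (Sym2.out_fst_mem f1))
                (hx ▸ Sym2.out_fst_mem f2 : f1.out.1 ∈ f2)
            subst hff
            have hcc : s(f1.out.1, z1) = s(f1.out.1, z2) := by
              rw [hm1.2, hm2.2]
            rcases Sym2.eq_iff.1 hcc with ⟨-, hzz⟩ | ⟨h1, h2⟩
            · subst hzz; rfl
            · exfalso
              exact hz2.2.1 (h1 ▸ Sym2.out_fst_mem f1)
      have hr : (r : ℝ) ≤ (F.card : ℝ) := by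
        have h2 : (Win.card : ℝ) ≤ 2 * (F.card : ℝ) := by exact_mod_cast hfib
        have : s / 4 ≤ (F.card : ℝ) := by linarith
        calc (r : ℝ) ≤ (⌈s / 4⌉₊ : ℝ) := le_of_eq (by rw [hrdef])
          _ ≤ (F.card : ℝ) := by exact_mod_cast Nat.ceil_le.2 this
      have hFeq : Sin.filter (fun c => ∀ c' ∈ gIn c, ω c' = true) = F := by
        refine Finset.filter_congr (fun c _ => ?_)
        simp [hgIn]
      rw [hFeq]
      exact_mod_cast hr
  -- measure bound
  refine (measure_mono hsub).trans ?_
  refine (measure_union_le _ _).trans ?_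
  have hgcard : ∀ q ∈ Dout, 2 ≤ (gOut q).card := by
    rintro ⟨f, z⟩ hq
    have hq' := Finset.mem_sigma.1 hq
    have hz : z ∉ VA := (Finset.mem_sdiff.1 hq'.2).2
    have hne : s(f.out.1, z) ≠ s(f.out.2, z) := by
      intro h
      rcases Sym2.eq_iff.1 h with ⟨h1, -⟩ | ⟨h1, h2⟩
      · exact out_ne f (hA.1 f hq'.1) h1
      · exact hz (h2 ▸ hVAmem hq'.1 (Sym2.out_snd_mem f))
    rw [hgOut]
    simp only []
    rw [Finset.card_pair hne]
  have hgdisj : ∀ q ∈ Dout, ∀ q' ∈ Dout, q ≠ q' → Disjoint (gOut q) (gOut q') := by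
    rintro ⟨f, z⟩ hq ⟨f', z'⟩ hq' hne
    have hq1 := Finset.mem_sigma.1 hq
    have hq2 := Finset.mem_sigma.1 hq'
    have hzVA : z ∉ VA := (Finset.mem_sdiff.1 hq1.2).2
    have hz'VA : z' ∉ VA := (Finset.mem_sdiff.1 hq2.2).2
    rw [Finset.disjoint_left]
    intro c hc hc'
    have hx : ∃ x, x ∈ f ∧ c = s(x, z) := by
      rcases Finset.mem_insert.1 hc with rfl | hc
      · exact ⟨f.out.1, Sym2.out_fst_mem f, rfl⟩
      · exact ⟨f.out.2, Sym2.out_snd_mem f, Finset.mem_singleton.1 hc⟩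
    have hx' : ∃ x', x' ∈ f' ∧ c = s(x', z') := by
      rcases Finset.mem_insert.1 hc' with rfl | hc'
      · exact ⟨f'.out.1, Sym2.out_fst_mem f', rfl⟩
      · exact ⟨f'.out.2, Sym2.out_snd_mem f', Finset.mem_singleton.1 hc'⟩
    obtain ⟨x, hxf, rfl⟩ := hx
    obtain ⟨x', hx'f, heq⟩ := hx'
    rcases Sym2.eq_iff.1 heq with ⟨h1, h2⟩ | ⟨h1, h2⟩
    · -- x = x', z = z' : then f = f' by the matching property, contradiction with q ≠ q'
      have hff : f = f' := by
        by_contra hff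
        exact (hA.2 f hq1.1 f' hq2.1 hff x hxf) (h1 ▸ hx'f)
      apply hne
      subst hff; subst h2; rfl
    · -- x = z', z = x' : z ∈ f' ⊆ VA, contradiction
      exact hzVA (hVAmem hq2.1 (h2 ▸ hx'f))
  have houtb := lemA n p hp Dout gOut hgdisj 2 r hgcard
  have hinb := lemA n p hp Sin gIn
    (fun i _ j _ hij => Finset.disjoint_singleton.2 hij) 1 r
    (fun i _ => by simp [hgIn])
  refine add_le_add (houtb.trans ?_) (hinb.trans ?_)
  · refine mul_le_mul_left ?_ _
    have hDcard : Dout.card ≤ a0 * n := by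
      rw [hDout, Finset.card_sigma]
      calc ∑ _f ∈ A, (Finset.univ \ VA).card = A.card * (Finset.univ \ VA).card := by
            rw [Finset.sum_const, smul_eq_mul]
        _ ≤ a0 * n := by
            refine Nat.mul_le_mul hcard ?_
            calc (Finset.univ \ VA).card ≤ (Finset.univ : Finset (Fin n)).card :=
                  Finset.card_le_card (Finset.sdiff_subset)
              _ = n := by rw [Finset.card_univ, Fintype.card_fin]
    exact_mod_cast Nat.choose_le_choose r hDcard
  · refine mul_le_mul_left ?_ _
    have hScard : Sin.card ≤ 4 * a0 ^ 2 := by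
      calc Sin.card ≤ (VA ×ˢ VA).card := Finset.card_image_le
        _ = VA.card * VA.card := Finset.card_product _ _
        _ ≤ (2 * a0) * (2 * a0) := by
            have : VA.card ≤ 2 * a0 := hVAcard.trans (by omega)
            exact Nat.mul_le_mul this this
        _ = 4 * a0 ^ 2 := by ring
    exact_mod_cast Nat.choose_le_choose r hScard

end T0aux

namespace T0aux

lemma pow_le_exp_factorial : ∀ r : ℕ, ((r : ℝ)) ^ r ≤ Real.exp r * (r.factorial : ℝ)
  | 0 => by simp
  | (k + 1) => by
    have ih := pow_le_exp_factorial k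
    have hstep : ((k : ℝ) + 1) ^ k ≤ Real.exp 1 * (k : ℝ) ^ k := by
      rcases Nat.eq_zero_or_pos k with rfl | hk
      · simp
      · have hk0 : (0 : ℝ) < (k : ℝ) := by exact_mod_cast hk
        have h1 : (k : ℝ) + 1 ≤ (k : ℝ) * Real.exp (1 / (k : ℝ)) := by
          have h2 := Real.add_one_le_exp (1 / (k : ℝ))
          calc (k : ℝ) + 1 = (k : ℝ) * (1 / (k : ℝ) + 1) := by field_simp; ring
            _ ≤ (k : ℝ) * Real.exp (1 / (k : ℝ)) := mul_le_mul_of_nonneg_left h2 hk0.le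
        calc ((k : ℝ) + 1) ^ k ≤ ((k : ℝ) * Real.exp (1 / (k : ℝ))) ^ k :=
              pow_le_pow_left₀ (by positivity) h1 k
          _ = (k : ℝ) ^ k * Real.exp (1 / (k : ℝ)) ^ k := mul_pow _ _ _
          _ = (k : ℝ) ^ k * Real.exp 1 := by
              rw [← Real.exp_nat_mul]
              congr 1
              field_simp
          _ = Real.exp 1 * (k : ℝ) ^ k := mul_comm _ _
    have hfac : ((k + 1).factorial : ℝ) = ((k : ℝ) + 1) * (k.factorial : ℝ) := by
      rw [Nat.factorial_succ]; push_cast; ring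
    have hexp : Real.exp ((k : ℝ) + 1) = Real.exp 1 * Real.exp (k : ℝ) := by
      rw [← Real.exp_add]; ring_nf
    have hk1 : (0 : ℝ) ≤ (k : ℝ) + 1 := by positivity
    have hcalc : (((k : ℕ) + 1 : ℕ) : ℝ) ^ (k + 1) ≤ Real.exp ((k : ℝ) + 1) * ((k + 1).factorial : ℝ) := by
      push_cast
      calc ((k : ℝ) + 1) ^ (k + 1) = ((k : ℝ) + 1) ^ k * ((k : ℝ) + 1) := pow_succ _ _
        _ ≤ (Real.exp 1 * (k : ℝ) ^ k) * ((k : ℝ) + 1) :=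
            mul_le_mul_of_nonneg_right hstep hk1
        _ ≤ (Real.exp 1 * (Real.exp (k : ℝ) * (k.factorial : ℝ))) * ((k : ℝ) + 1) := by
            refine mul_le_mul_of_nonneg_right (mul_le_mul_of_nonneg_left ih ?_) hk1
            positivity
        _ = Real.exp ((k : ℝ) + 1) * (((k : ℝ) + 1) * (k.factorial : ℝ)) := by
            rw [hexp]; ring
        _ = Real.exp ((k : ℝ) + 1) * (((k + 1).factorial : ℝ)) := by rw [hfac]
    calc (((k + 1 : ℕ)) : ℝ) ^ (k + 1) = (((k : ℕ) + 1 : ℕ) : ℝ) ^ (k + 1) := by norm_num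
      _ ≤ Real.exp ((k : ℝ) + 1) * ((k + 1).factorial : ℝ) := hcalc
      _ = Real.exp ((k + 1 : ℕ)) * ((k + 1).factorial : ℝ) := by push_cast; ring_nf

lemma choose_mul_pow_le (N r : ℕ) (hr : 1 ≤ r) (y : ℝ) (hy : 0 ≤ y) :
    (N.choose r : ℝ) * y ^ r ≤ ((N : ℝ) * y * Real.exp 1 / r) ^ r := by
  have hr0 : (0 : ℝ) < (r : ℝ) := by exact_mod_cast hr
  have hfac0 : (0 : ℝ) < (r.factorial : ℝ) := by exact_mod_cast r.factorial_pos
  have h1 : (N.choose r : ℝ) ≤ (N : ℝ) ^ r / (r.factorial : ℝ) := Nat.choose_le_pow_div r N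
  have hNy : (0 : ℝ) ≤ (N : ℝ) ^ r * y ^ r := by positivity
  calc (N.choose r : ℝ) * y ^ r ≤ ((N : ℝ) ^ r / (r.factorial : ℝ)) * y ^ r :=
        mul_le_mul_of_nonneg_right h1 (pow_nonneg hy r)
    _ = ((N : ℝ) ^ r * y ^ r) / (r.factorial : ℝ) := by ring
    _ ≤ ((N : ℝ) ^ r * y ^ r) * Real.exp r / (r : ℝ) ^ r := by
        rw [div_le_div_iff₀ hfac0 (by positivity)]
        have := pow_le_exp_factorial r
        nlinarith [hNy, this, Real.exp_pos (r : ℝ)]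
    _ = ((N : ℝ) * y * Real.exp 1 / r) ^ r := by
        rw [div_pow, mul_pow, mul_pow, Real.exp_one_pow]

lemma matchcount (n a0 : ℕ) (hn : 1 ≤ n) :
    (Finset.univ.filter
      (fun A : Finset (Sym2 (Fin n)) => IsMatching A ∧ A.card ≤ a0)).card
      ≤ (a0 + 1) * (n ^ 2) ^ a0 := by
  classical
  have hsym : Fintype.card (Sym2 (Fin n)) ≤ n ^ 2 := by
    have hsurj : Function.Surjective (fun q : Fin n × Fin n => s(q.1, q.2)) := by
      intro z
      exact Sym2.ind (fun x y => ⟨(x, y), rfl⟩) z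
    calc Fintype.card (Sym2 (Fin n)) ≤ Fintype.card (Fin n × Fin n) :=
          Fintype.card_le_of_surjective _ hsurj
      _ = n ^ 2 := by rw [Fintype.card_prod, Fintype.card_fin]; ring
  have hsub : Finset.univ.filter
      (fun A : Finset (Sym2 (Fin n)) => IsMatching A ∧ A.card ≤ a0) ⊆
      (Finset.range (a0 + 1)).biUnion
        (fun j => (Finset.univ : Finset (Sym2 (Fin n))).powersetCard j) := by
    intro A hA
    have hAc : A.card ≤ a0 := (Finset.mem_filter.1 hA).2.2
    refine Finset.mem_biUnion.2 ⟨A.card, Finset.mem_range.2 (by omega), ?_⟩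
    exact Finset.mem_powersetCard.2 ⟨Finset.subset_univ _, rfl⟩
  calc (Finset.univ.filter
      (fun A : Finset (Sym2 (Fin n)) => IsMatching A ∧ A.card ≤ a0)).card
      ≤ ((Finset.range (a0 + 1)).biUnion
        (fun j => (Finset.univ : Finset (Sym2 (Fin n))).powersetCard j)).card :=
        Finset.card_le_card hsub
    _ ≤ ∑ j ∈ Finset.range (a0 + 1),
        ((Finset.univ : Finset (Sym2 (Fin n))).powersetCard j).card :=
        Finset.card_biUnion_le
    _ ≤ (a0 + 1) * (n ^ 2) ^ a0 := by
        have hbound : ∀ j ∈ Finset.range (a0 + 1),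
            ((Finset.univ : Finset (Sym2 (Fin n))).powersetCard j).card ≤ (n ^ 2) ^ a0 := by
          intro j hj
          rw [Finset.card_powersetCard, Finset.card_univ]
          calc (Fintype.card (Sym2 (Fin n))).choose j ≤ (Fintype.card (Sym2 (Fin n))) ^ j :=
                Nat.choose_le_pow _ _
            _ ≤ (n ^ 2) ^ j := Nat.pow_le_pow_left hsym j
            _ ≤ (n ^ 2) ^ a0 := Nat.pow_le_pow_right (by nlinarith) (by
                have := Finset.mem_range.1 hj; omega)
        calc ∑ j ∈ Finset.range (a0 + 1),
            ((Finset.univ : Finset (Sym2 (Fin n))).powersetCard j).card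
            ≤ (Finset.range (a0 + 1)).card * (n ^ 2) ^ a0 := by
              have := Finset.sum_le_card_nsmul (Finset.range (a0 + 1))
                (fun j => ((Finset.univ : Finset (Sym2 (Fin n))).powersetCard j).card)
                ((n ^ 2) ^ a0) hbound
              simpa [smul_eq_mul] using this
          _ = (a0 + 1) * (n ^ 2) ^ a0 := by rw [Finset.card_range]

lemma T0_zero {n : ℕ} (hn : n < 3) (ε P : ℝ) (ω : Sym2 (Fin n) → Bool) :
    triBadEdgeGoodVerts ε P ω = 0 := by
  rw [triBadEdgeGoodVerts, Finset.card_eq_zero, Finset.filter_eq_empty_iff]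
  intro t _
  rintro ⟨⟨hcard, -⟩, -⟩
  have := Finset.card_le_univ t
  simp only [Finset.card_univ, Fintype.card_fin] at this
  omega

end T0aux

namespace T0aux

set_option maxHeartbeats 2000000 in
lemma mainbound (ε : ℝ) (hε : 0 < ε) (C : ℝ) (hC0 : 0 < C)
    (hCΛ : C ≤ Real.exp (-(4 * Real.log (4096 * Real.exp 1 / ε) + 4)))
    (hC1 : C ≤ Real.exp (-1)) (hCε : C ≤ ε / 88) (hCs : C ≤ Real.sqrt ε / 2)
    (n : ℕ) (p : ℝ≥0) (hp : p ≤ 1)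
    (hlow : C⁻¹ * Real.log n / n ≤ (p : ℝ)) (hup : (p : ℝ) ≤ C) :
    erMeasure n p hp
        {ω | 15 * ε * (n : ℝ) ^ 3 * (p : ℝ) ^ 3 < (triBadEdgeGoodVerts ε (p : ℝ) ω : ℝ)}
      ≤ ENNReal.ofReal
          (Real.exp (-C * (n : ℝ) ^ 2 * (p : ℝ) ^ 2 * Real.log (1 / (p : ℝ)))) := by
  classical
  set Λ : ℝ := 4 * Real.log (4096 * Real.exp 1 / ε) + 4 with hΛdef
  have hexpneg1 : Real.exp (-1 : ℝ) < 1 := by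
    have := Real.exp_lt_exp.2 (show (-1 : ℝ) < 0 by norm_num)
    simpa [Real.exp_zero] using this
  have hClt1 : C < 1 := lt_of_le_of_lt hC1 hexpneg1
  rcases lt_or_ge n 3 with hn3 | hn3
  · -- degenerate case: no triangles at all
    have hzero : {ω : Sym2 (Fin n) → Bool |
        15 * ε * (n : ℝ) ^ 3 * (p : ℝ) ^ 3 < (triBadEdgeGoodVerts ε (p : ℝ) ω : ℝ)} = ∅ := by
      ext ω
      simp only [Set.mem_setOf_eq, Set.mem_empty_iff_false, iff_false, not_lt]
      rw [T0_zero hn3]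
      have : (0 : ℝ) ≤ 15 * ε * (n : ℝ) ^ 3 * (p : ℝ) ^ 3 := by positivity
      simpa using this
    rw [hzero]
    simp
  -- main case
  set P : ℝ := (p : ℝ) with hPdef
  have hn0 : 0 < n := by omega
  have hnR : (0 : ℝ) < (n : ℝ) := by exact_mod_cast hn0
  have hn1R : (1 : ℝ) < (n : ℝ) := by
    have : (3 : ℝ) ≤ (n : ℝ) := by exact_mod_cast hn3
    linarith
  have hP0 : 0 < P := by
    rcases eq_or_lt_of_le (show (0 : ℝ) ≤ P from p.coe_nonneg) with h0 | h0
    · exfalso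
      have hln : (0 : ℝ) < Real.log n := Real.log_pos hn1R
      have hpos : (0 : ℝ) < C⁻¹ * Real.log n / n := by positivity
      rw [← h0] at hlow
      linarith
    · exact h0
  have hP1 : P < 1 := lt_of_le_of_lt hup hClt1
  set L : ℝ := Real.log (1 / P) with hLdef
  have hLeq : L = -Real.log P := by rw [hLdef, one_div, Real.log_inv]
  have hPL : P = Real.exp (-L) := by
    rw [hLeq, neg_neg]
    exact (Real.exp_log hP0).symm
  have hlogPC : Real.log P ≤ Real.log C := Real.log_le_log hP0 hup
  have hL1 : 1 ≤ L := by
    have h2 : Real.log C ≤ -1 := by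
      calc Real.log C ≤ Real.log (Real.exp (-1)) := Real.log_le_log hC0 hC1
        _ = -1 := Real.log_exp _
    rw [hLeq]; linarith
  have hLΛ : Λ ≤ L := by
    have h2 : Real.log C ≤ -Λ := by
      calc Real.log C ≤ Real.log (Real.exp (-Λ)) := Real.log_le_log hC0 hCΛ
        _ = -Λ := Real.log_exp _
    rw [hLeq]; linarith
  set x : ℝ := (n : ℝ) * P with hxdef
  have hx0 : 0 < x := by positivity
  have hlogn_pos : (0 : ℝ) ≤ Real.log n := Real.log_nonneg hn1R.le
  have hlogn : Real.log n ≤ C * x := by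
    have h2 : C⁻¹ * Real.log n ≤ P * n := (div_le_iff₀ hnR).1 hlow
    calc Real.log n = C * (C⁻¹ * Real.log n) := by field_simp
      _ ≤ C * (P * n) := mul_le_mul_of_nonneg_left h2 hC0.le
      _ = C * x := by rw [hxdef]; ring
  have hlog3 : (1 : ℝ) ≤ Real.log n := by
    have hexp3 : Real.exp 1 ≤ (n : ℝ) := by
      have h1 : Real.exp 1 < 2.7182818286 := Real.exp_one_lt_d9
      have h2 : (3 : ℝ) ≤ (n : ℝ) := by exact_mod_cast hn3
      linarith
    exact (Real.le_log_iff_exp_le hnR).2 hexp3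
  have hxC : 1 ≤ C * x := le_trans hlog3 hlogn
  have hx1 : 1 ≤ x := by
    have h := mul_lt_mul_of_pos_right hClt1 hx0
    rw [one_mul] at h
    linarith
  set s : ℝ := ε * (n : ℝ) ^ 2 * P ^ 2 with hsdef
  have hx2 : x ^ 2 = (n : ℝ) ^ 2 * P ^ 2 := by rw [hxdef]; ring
  have hsx : s = ε * x ^ 2 := by rw [hsdef, hx2]; ring
  have hs4 : 4 ≤ s := by
    have hCe : C ^ 2 ≤ ε / 4 := by
      have h1 : C ^ 2 ≤ (Real.sqrt ε / 2) ^ 2 := pow_le_pow_left₀ hC0.le hCs 2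
      have h2 : (Real.sqrt ε / 2) ^ 2 = ε / 4 := by
        rw [div_pow, Real.sq_sqrt hε.le]; norm_num
      linarith
    have h5 : 1 ≤ (C * x) ^ 2 := by
      have := pow_le_pow_left₀ (by norm_num : (0:ℝ) ≤ 1) hxC 2
      simpa using this
    have h4 : 4 ≤ ε * x ^ 2 := by
      have hεC : 4 * C ^ 2 ≤ ε := by linarith
      calc (4 : ℝ) = 4 * 1 := by norm_num
        _ ≤ 4 * (C * x) ^ 2 := by linarith
        _ = (4 * C ^ 2) * x ^ 2 := by ring
        _ ≤ ε * x ^ 2 := mul_le_mul_of_nonneg_right hεC (sq_nonneg x)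
    rw [hsx]; exact h4
  have hs0 : 0 < s := by linarith
  obtain ⟨a0, ha0def⟩ : ∃ a0 : ℕ, a0 = ⌊x * L⌋₊ + 1 := ⟨_, rfl⟩
  have hxL1 : 1 ≤ x * L := by
    have := mul_le_mul hx1 hL1 (by norm_num) (by linarith : (0:ℝ) ≤ x)
    linarith
  have ha0low : x * L ≤ (a0 : ℝ) := by
    rw [ha0def]
    push_cast
    linarith [Nat.lt_floor_add_one (x * L)]
  have ha0up : (a0 : ℝ) ≤ 2 * (x * L) := by
    rw [ha0def]
    push_cast
    have := Nat.floor_le (show (0 : ℝ) ≤ x * L by linarith)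
    linarith
  have ha00 : (0 : ℝ) ≤ (a0 : ℝ) := Nat.cast_nonneg _
  obtain ⟨r, hrdef⟩ : ∃ r : ℕ, r = ⌈s / 4⌉₊ := ⟨_, rfl⟩
  have hrlow : s / 4 ≤ (r : ℝ) := by rw [hrdef]; exact Nat.le_ceil _
  have hr1 : 1 ≤ r := by
    have : 0 < r := by rw [hrdef]; exact Nat.ceil_pos.2 (by linarith)
    omega
  have hr0 : (0 : ℝ) < (r : ℝ) := by exact_mod_cast hr1
  -- covering by matchings
  set 𝒜 : Finset (Finset (Sym2 (Fin n))) :=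
    Finset.univ.filter (fun A => IsMatching A ∧ A.card ≤ a0) with h𝒜
  have hcover : {ω : Sym2 (Fin n) → Bool |
      15 * ε * (n : ℝ) ^ 3 * P ^ 3 < (triBadEdgeGoodVerts ε P ω : ℝ)} ⊆
      ⋃ A ∈ 𝒜, {ω | s ≤ ∑ f ∈ A, (commonNbrs ω f : ℝ)} := by
    intro ω hω
    obtain ⟨A, hAm, hAc, hAs⟩ := extract hn0 ε P hε hP0 hP1 a0
      (by rw [← hLdef, ← hxdef]; exact ha0low) ω hω
    refine Set.mem_biUnion (Finset.mem_filter.2 ⟨Finset.mem_univ _, hAm, hAc⟩) ?_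
    rw [Set.mem_setOf_eq, hsdef]
    exact hAs
  have hmeas1 : erMeasure n p hp {ω : Sym2 (Fin n) → Bool |
      15 * ε * (n : ℝ) ^ 3 * P ^ 3 < (triBadEdgeGoodVerts ε P ω : ℝ)} ≤
      ∑ A ∈ 𝒜, (((a0 * n).choose r : ℝ≥0∞) * (p : ℝ≥0∞) ^ (2 * r)
        + ((4 * a0 ^ 2).choose r : ℝ≥0∞) * (p : ℝ≥0∞) ^ (1 * r)) := by
    refine le_trans (measure_mono hcover) ?_
    refine le_trans (measure_biUnion_finset_le _ _) ?_
    refine Finset.sum_le_sum (fun A hA => ?_)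
    have hA' := (Finset.mem_filter.1 hA).2
    have hpm := perMatching p hp s hs4 a0 A hA'.1 hA'.2
    rw [← hrdef] at hpm
    exact hpm
  -- convert to a real bound
  set D : ℝ := Real.exp (-(L / 2)) with hDdef
  have hD0 : 0 < D := Real.exp_pos _
  set A4 : ℝ := Real.exp (L / 4) with hA4def
  have hA40 : 0 < A4 := Real.exp_pos _
  have hA4P : A4 ^ 2 * P = D := by
    rw [hA4def, hPL, hDdef, pow_two, ← Real.exp_add, ← Real.exp_add]
    ring_nf
  have hA4big : 4096 * Real.exp 1 / ε ≤ A4 := by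
    have h1 : Real.log (4096 * Real.exp 1 / ε) ≤ L / 4 := by
      rw [hΛdef] at hLΛ
      linarith
    calc 4096 * Real.exp 1 / ε = Real.exp (Real.log (4096 * Real.exp 1 / ε)) :=
          (Real.exp_log (by positivity)).symm
      _ ≤ A4 := Real.exp_le_exp.2 h1
  have hεA4 : 4096 * Real.exp 1 ≤ ε * A4 := by
    rw [div_le_iff₀ hε] at hA4big
    linarith [hA4big]
  have hL4A : L ≤ 4 * A4 := by
    have := Real.add_one_le_exp (L / 4)
    rw [← hA4def] at this
    linarith
  have hL2A : L ^ 2 ≤ 64 * A4 := by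
    have h8 : L / 8 + 1 ≤ Real.exp (L / 8) := Real.add_one_le_exp _
    have hsq : Real.exp (L / 8) ^ 2 = A4 := by
      rw [pow_two, ← Real.exp_add, hA4def]
      ring_nf
    set E : ℝ := Real.exp (L / 8) with hEdef
    have hE0 : 0 < E := Real.exp_pos _
    have hLE : L ≤ 8 * E := by linarith
    have hL0 : (0 : ℝ) ≤ L := by linarith
    have hmul := mul_le_mul hLE hLE hL0 (by positivity)
    have hq : (8 * E) * (8 * E) = 64 * A4 := by rw [← hsq]; ring
    calc L ^ 2 = L * L := sq L
      _ ≤ (8 * E) * (8 * E) := hmul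
      _ = 64 * A4 := hq
  have hAP0 : 0 < A4 * P := by positivity
  have he0 : (0 : ℝ) < Real.exp 1 := Real.exp_pos _
  -- the two base bounds
  have hbase1 : ((a0 : ℝ) * (n : ℝ)) * P ^ 2 * Real.exp 1 / (r : ℝ) ≤ D := by
    have hstep1 : ((a0 : ℝ) * (n : ℝ)) * P ^ 2 * Real.exp 1 / (r : ℝ)
        ≤ (2 * (x * L) * (n : ℝ) * P ^ 2 * Real.exp 1) / (s / 4) := by
      gcongr
      all_goals first | positivity | linarith
    have hstep2 : (2 * (x * L) * (n : ℝ) * P ^ 2 * Real.exp 1) / (s / 4)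
        = 8 * Real.exp 1 * L * P / ε := by
      rw [hsdef, hxdef]
      field_simp
      ring
    have hstep3 : 8 * Real.exp 1 * L * P / ε ≤ D := by
      rw [div_le_iff₀ hε]
      calc 8 * Real.exp 1 * L * P ≤ 8 * Real.exp 1 * (4 * A4) * P := by
            have h1 : (8 * Real.exp 1 * P) * L ≤ (8 * Real.exp 1 * P) * (4 * A4) :=
              mul_le_mul_of_nonneg_left hL4A (by positivity)
            linarith [h1, (by ring : (8 * Real.exp 1 * P) * L = 8 * Real.exp 1 * L * P),
              (by ring : (8 * Real.exp 1 * P) * (4 * A4) = 8 * Real.exp 1 * (4 * A4) * P)]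
        _ = 32 * Real.exp 1 * (A4 * P) := by ring
        _ ≤ (ε * A4) * (A4 * P) := by
            refine mul_le_mul_of_nonneg_right ?_ hAP0.le
            linarith [he0]
        _ = D * ε := by rw [← hA4P]; ring
    calc ((a0 : ℝ) * (n : ℝ)) * P ^ 2 * Real.exp 1 / (r : ℝ)
        ≤ (2 * (x * L) * (n : ℝ) * P ^ 2 * Real.exp 1) / (s / 4) := hstep1
      _ = 8 * Real.exp 1 * L * P / ε := hstep2
      _ ≤ D := hstep3
  have hbase2 : ((4 * a0 ^ 2 : ℕ) : ℝ) * P * Real.exp 1 / (r : ℝ) ≤ D := by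
    have hnum : ((4 * a0 ^ 2 : ℕ) : ℝ) ≤ 16 * (x * L) ^ 2 := by
      push_cast
      have h1 : (a0 : ℝ) * (a0 : ℝ) ≤ (2 * (x * L)) * (2 * (x * L)) :=
        mul_le_mul ha0up ha0up ha00 (by positivity)
      calc 4 * (a0 : ℝ) ^ 2 = 4 * ((a0 : ℝ) * (a0 : ℝ)) := by ring
        _ ≤ 4 * ((2 * (x * L)) * (2 * (x * L))) := by linarith
        _ = 16 * (x * L) ^ 2 := by ring
    have hstep1 : ((4 * a0 ^ 2 : ℕ) : ℝ) * P * Real.exp 1 / (r : ℝ)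
        ≤ (16 * (x * L) ^ 2 * P * Real.exp 1) / (s / 4) := by
      gcongr
      all_goals first | positivity | linarith
    have hstep2 : (16 * (x * L) ^ 2 * P * Real.exp 1) / (s / 4)
        = 64 * Real.exp 1 * L ^ 2 * P / ε := by
      rw [hsx, hxdef]
      have hne : (n : ℝ) * P ≠ 0 := by positivity
      field_simp
      ring
    have hstep3 : 64 * Real.exp 1 * L ^ 2 * P / ε ≤ D := by
      rw [div_le_iff₀ hε]
      calc 64 * Real.exp 1 * L ^ 2 * P ≤ 64 * Real.exp 1 * (64 * A4) * P := by
            have h1 : (64 * Real.exp 1 * P) * L ^ 2 ≤ (64 * Real.exp 1 * P) * (64 * A4) :=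
              mul_le_mul_of_nonneg_left hL2A (by positivity)
            linarith [h1, (by ring : (64 * Real.exp 1 * P) * L ^ 2 = 64 * Real.exp 1 * L ^ 2 * P),
              (by ring : (64 * Real.exp 1 * P) * (64 * A4) = 64 * Real.exp 1 * (64 * A4) * P)]
        _ = 4096 * Real.exp 1 * (A4 * P) := by ring
        _ ≤ (ε * A4) * (A4 * P) := by
            refine mul_le_mul_of_nonneg_right ?_ hAP0.le
            linarith
        _ = D * ε := by rw [← hA4P]; ring
    calc ((4 * a0 ^ 2 : ℕ) : ℝ) * P * Real.exp 1 / (r : ℝ)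
        ≤ (16 * (x * L) ^ 2 * P * Real.exp 1) / (s / 4) := hstep1
      _ = 64 * Real.exp 1 * L ^ 2 * P / ε := hstep2
      _ ≤ D := hstep3
  have hB1 : (((a0 * n).choose r : ℕ) : ℝ) * P ^ (2 * r) ≤ D ^ r := by
    have h1 : P ^ (2 * r) = (P ^ 2) ^ r := by rw [← pow_mul]
    rw [h1]
    calc (((a0 * n).choose r : ℕ) : ℝ) * (P ^ 2) ^ r
        ≤ (((a0 * n : ℕ) : ℝ) * P ^ 2 * Real.exp 1 / r) ^ r :=
          choose_mul_pow_le (a0 * n) r hr1 (P ^ 2) (by positivity)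
      _ ≤ D ^ r := by
          refine pow_le_pow_left₀ (by positivity) ?_ r
          calc ((a0 * n : ℕ) : ℝ) * P ^ 2 * Real.exp 1 / r
              = ((a0 : ℝ) * (n : ℝ)) * P ^ 2 * Real.exp 1 / r := by push_cast; ring
            _ ≤ D := hbase1
  have hB2 : (((4 * a0 ^ 2).choose r : ℕ) : ℝ) * P ^ (1 * r) ≤ D ^ r := by
    rw [one_mul]
    calc (((4 * a0 ^ 2).choose r : ℕ) : ℝ) * P ^ r
        ≤ (((4 * a0 ^ 2 : ℕ) : ℝ) * P * Real.exp 1 / r) ^ r :=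
          choose_mul_pow_le (4 * a0 ^ 2) r hr1 P hP0.le
      _ ≤ D ^ r := pow_le_pow_left₀ (by positivity) hbase2 r
  -- exponent comparison
  have hDr : D ^ r = Real.exp (-(L / 2) * r) := by
    rw [hDdef, ← Real.exp_nat_mul]
    ring_nf
  have hcount : ((𝒜.card : ℕ) : ℝ) ≤ ((a0 + 1 : ℕ) : ℝ) * (((n ^ 2) ^ a0 : ℕ) : ℝ) := by
    have hmc := matchcount n a0 hn0
    rw [← h𝒜] at hmc
    rw [← Nat.cast_mul]
    exact_mod_cast hmc
  have hfinalReal : ((𝒜.card : ℕ) : ℝ) *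
      ((((a0 * n).choose r : ℕ) : ℝ) * P ^ (2 * r)
        + (((4 * a0 ^ 2).choose r : ℕ) : ℝ) * P ^ (1 * r))
      ≤ Real.exp (-C * (n : ℝ) ^ 2 * P ^ 2 * L) := by
    have hsum2 : (((a0 * n).choose r : ℕ) : ℝ) * P ^ (2 * r)
        + (((4 * a0 ^ 2).choose r : ℕ) : ℝ) * P ^ (1 * r) ≤ 2 * D ^ r := by
      linarith [hB1, hB2]
    have hsum2' : (0 : ℝ) ≤ (((a0 * n).choose r : ℕ) : ℝ) * P ^ (2 * r)
        + (((4 * a0 ^ 2).choose r : ℕ) : ℝ) * P ^ (1 * r) := by positivity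
    have hM : ((𝒜.card : ℕ) : ℝ) * ((((a0 * n).choose r : ℕ) : ℝ) * P ^ (2 * r)
        + (((4 * a0 ^ 2).choose r : ℕ) : ℝ) * P ^ (1 * r))
        ≤ (((a0 + 1 : ℕ) : ℝ) * (((n ^ 2) ^ a0 : ℕ) : ℝ)) * (2 * D ^ r) := by
      refine mul_le_mul hcount hsum2 hsum2' ?_
      positivity
    refine hM.trans ?_
    -- bound the prefactor by exponentials
    have hpre1 : ((a0 + 1 : ℕ) : ℝ) ≤ Real.exp ((a0 : ℝ) + 1) := by
      push_cast
      linarith [Real.add_one_le_exp ((a0 : ℝ) + 1)]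
    have hpre2 : (((n ^ 2) ^ a0 : ℕ) : ℝ) = Real.exp ((a0 : ℝ) * (2 * Real.log n)) := by
      push_cast
      rw [← Real.exp_log (show (0:ℝ) < ((n:ℝ)^2)^a0 by positivity), Real.log_pow]
      push_cast
      rw [Real.log_pow]
      push_cast
      ring_nf
    have hpre3 : (2 : ℝ) ≤ Real.exp 1 := by linarith [Real.add_one_le_exp (1 : ℝ)]
    have hexps : (((a0 + 1 : ℕ) : ℝ) * (((n ^ 2) ^ a0 : ℕ) : ℝ)) * (2 * D ^ r)
        ≤ Real.exp (((a0 : ℝ) + 1) + (a0 : ℝ) * (2 * Real.log n) + 1 + (-(L / 2) * r)) := by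
      rw [Real.exp_add, Real.exp_add, Real.exp_add, ← hDr]
      have h1 : (0 : ℝ) ≤ (((n ^ 2) ^ a0 : ℕ) : ℝ) := Nat.cast_nonneg _
      have h2 : (0 : ℝ) ≤ D ^ r := by positivity
      calc (((a0 + 1 : ℕ) : ℝ) * (((n ^ 2) ^ a0 : ℕ) : ℝ)) * (2 * D ^ r)
          = (((a0 + 1 : ℕ) : ℝ)) * ((((n ^ 2) ^ a0 : ℕ) : ℝ)) * 2 * D ^ r := by ring
        _ ≤ Real.exp ((a0 : ℝ) + 1) * Real.exp ((a0 : ℝ) * (2 * Real.log n)) *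
              Real.exp 1 * D ^ r := by
            refine mul_le_mul_of_nonneg_right ?_ h2
            refine mul_le_mul ?_ hpre3 (by norm_num) (by positivity)
            rw [hpre2]
            exact mul_le_mul_of_nonneg_right hpre1 (le_of_lt (Real.exp_pos _))
        _ = Real.exp ((a0 : ℝ) + 1) * Real.exp ((a0 : ℝ) * (2 * Real.log n)) *
              Real.exp 1 * D ^ r := rfl
    refine hexps.trans ?_
    rw [Real.exp_le_exp]
    -- final exponent inequality
    have hV0 : (0 : ℝ) < x ^ 2 * L := by positivity
    have g1 : (a0 : ℝ) + 1 + 1 ≤ 4 * (x * L) := by linarith [ha0up, hxL1]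
    have g2 : (a0 : ℝ) * (2 * Real.log n) ≤ 4 * C * (x ^ 2 * L) := by
      have hml := mul_le_mul ha0up
        (by linarith : 2 * Real.log n ≤ 2 * (C * x))
        (by linarith) (by linarith : (0:ℝ) ≤ 2 * (x * L))
      have heq : (2 * (x * L)) * (2 * (C * x)) = 4 * C * (x ^ 2 * L) := by ring
      linarith
    have g3 : 4 * (x * L) ≤ 4 * C * (x ^ 2 * L) := by
      have hml := mul_le_mul_of_nonneg_left hxC (by linarith [hxL1] : (0:ℝ) ≤ 4 * (x * L))
      have heq : (4 * (x * L)) * (C * x) = 4 * C * (x ^ 2 * L) := by ring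
      linarith
    have g4 : (ε / 8) * (x ^ 2 * L) ≤ (L / 2) * (r : ℝ) := by
      have h1 : ε * x ^ 2 / 4 ≤ (r : ℝ) := by rw [← hsx]; exact hrlow
      have hml := mul_le_mul_of_nonneg_left h1 (by linarith : (0:ℝ) ≤ L / 2)
      have heq : (L / 2) * (ε * x ^ 2 / 4) = (ε / 8) * (x ^ 2 * L) := by ring
      linarith
    have g5 : 10 * C * (x ^ 2 * L) ≤ (ε / 8) * (x ^ 2 * L) := by
      refine mul_le_mul_of_nonneg_right ?_ hV0.le
      linarith
    have hCx2 : -C * (n : ℝ) ^ 2 * P ^ 2 * L = -(C * (x ^ 2 * L)) := by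
      rw [hx2]; ring
    rw [hCx2]
    linarith [g1, g2, g3, g4, g5]
  -- put it together in ℝ≥0∞
  refine hmeas1.trans ?_
  rw [Finset.sum_const, nsmul_eq_mul]
  have hconv : ((𝒜.card : ℕ) : ℝ≥0∞) * (((a0 * n).choose r : ℝ≥0∞) * (p : ℝ≥0∞) ^ (2 * r)
      + ((4 * a0 ^ 2).choose r : ℝ≥0∞) * (p : ℝ≥0∞) ^ (1 * r))
      = ENNReal.ofReal (((𝒜.card : ℕ) : ℝ) *
        ((((a0 * n).choose r : ℕ) : ℝ) * P ^ (2 * r)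
          + (((4 * a0 ^ 2).choose r : ℕ) : ℝ) * P ^ (1 * r))) := by
    rw [ENNReal.ofReal_mul (Nat.cast_nonneg _), ENNReal.ofReal_add (by positivity) (by positivity),
      ENNReal.ofReal_mul (by positivity), ENNReal.ofReal_mul (by positivity),
      ENNReal.ofReal_pow (by positivity), ENNReal.ofReal_pow (by positivity),
      ENNReal.ofReal_natCast, ENNReal.ofReal_natCast, ENNReal.ofReal_natCast]
    rw [hPdef, ENNReal.ofReal_coe_nnreal]
  rw [hconv]
  exact ENNReal.ofReal_le_ofReal hfinalReal

end T0aux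


open T0aux in
/-- **Proposition 5.3**: upper tail for the number of triangles with at least one bad edge
but all good vertices. -/
theorem T0_tail (ε : ℝ) (hε : 0 < ε) :
    ∃ C : ℝ, 0 < C ∧ ∀ (n : ℕ) (p : ℝ≥0) (hp : p ≤ 1),
      C⁻¹ * Real.log n / n ≤ (p : ℝ) → (p : ℝ) ≤ C →
      erMeasure n p hp
          {ω | 15 * ε * (n : ℝ) ^ 3 * (p : ℝ) ^ 3 < (triBadEdgeGoodVerts ε (p : ℝ) ω : ℝ)}
        ≤ ENNReal.ofReal
            (Real.exp (-C * (n : ℝ) ^ 2 * (p : ℝ) ^ 2 * Real.log (1 / (p : ℝ)))) := by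
  refine ⟨min (Real.exp (-(4 * Real.log (4096 * Real.exp 1 / ε) + 4)))
      (min (Real.exp (-1)) (min (ε / 88) (Real.sqrt ε / 2))), ?_, ?_⟩
  · refine lt_min (Real.exp_pos _) (lt_min (Real.exp_pos _) (lt_min ?_ ?_)) <;> positivity
  · intro n p hp hlow hup
    exact mainbound ε hε _
      (lt_min (Real.exp_pos _) (lt_min (Real.exp_pos _)
        (lt_min (by positivity) (by positivity))))
      (min_le_left _ _)
      (le_trans (min_le_right _ _) (min_le_left _ _))
      (le_trans (min_le_right _ _) (le_trans (min_le_right _ _) (min_le_left _ _)))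
      (le_trans (min_le_right _ _) (le_trans (min_le_right _ _) (min_le_right _ _)))
      n p hp hlow hup
end

section
/- In the Erdős–Rényi random graph $G(n,p)$, let $d_u$ denote the degree of vertex $u$ and for a set of vertices $A$ let $d(A) := \sum_{u \in A} d_u$. Then for any nonempty set of vertices $A$ and any $t > 0$, $\mathbb{P}(d(A) \ge t) \le \exp\big(-\frac{t}{2}\log\frac{t}{6n|A|p}\big)$. -/
open MeasureTheory ProbabilityTheory Real
open scoped Classical ENNReal NNReal

section AuxMeasure

variable {ι : Type*} [Fintype ι] {β : Type*} [MeasurableSpace β]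
  (μ : Measure β) [IsProbabilityMeasure μ]

lemma pi_iInter_eval (S : Finset ι) (sets : ι → Set β) :
    Measure.pi (fun _ : ι => μ) (⋂ i ∈ S, (fun ω : ι → β => ω i) ⁻¹' sets i) =
      ∏ i ∈ S, μ (sets i) := by
  classical
  have h : (⋂ i ∈ S, (fun ω : ι → β => ω i) ⁻¹' sets i) =
      Set.pi Set.univ (fun i => if i ∈ S then sets i else Set.univ) := by
    ext x
    simp only [Set.mem_iInter, Set.mem_preimage, Set.mem_pi, Set.mem_univ, true_implies]
    constructor
    · intro hx i
      by_cases hi : i ∈ S <;> simp [hi, hx]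
    · intro hx i hi
      have := hx i
      simpa [hi] using this
  rw [h, Measure.pi_pi]
  have : ∀ i : ι, μ (if i ∈ S then sets i else Set.univ) =
      if i ∈ S then μ (sets i) else 1 := by
    intro i; by_cases hi : i ∈ S <;> simp [hi]
  simp_rw [this]
  rw [Finset.prod_ite_mem Finset.univ S (fun i => μ (sets i)), Finset.univ_inter]

lemma iIndepFun_eval :
    iIndepFun (fun (i : ι) (ω : ι → β) => ω i)
      (Measure.pi (fun _ : ι => μ)) := by
  classical
  rw [ProbabilityTheory.iIndepFun_iff_measure_inter_preimage_eq_mul]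
  intro S sets _
  rw [pi_iInter_eval μ S sets]
  refine Finset.prod_congr rfl fun i _ => ?_
  have := pi_iInter_eval μ ({i} : Finset ι) sets
  simpa using this.symm

lemma map_eval_pi (i : ι) :
    (Measure.pi (fun _ : ι => μ)).map (fun ω : ι → β => ω i) = μ := by
  ext s hs
  rw [Measure.map_apply (measurable_pi_apply i) hs]
  have := pi_iInter_eval μ ({i} : Finset ι) (fun _ => s)
  simpa using this

end AuxMeasure

noncomputable def edgeMult (n : ℕ) (A : Finset (Fin n)) (e : Sym2 (Fin n)) : ℕ :=
  ((A ×ˢ Finset.univ).filter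
    (fun q : Fin n × Fin n => q.1 ≠ q.2 ∧ s(q.1, q.2) = e)).card

lemma edgeMult_le_two (n : ℕ) (A : Finset (Fin n)) (e : Sym2 (Fin n)) :
    edgeMult n A e ≤ 2 := by
  induction e using Sym2.ind with
  | _ a b =>
    have hsub : ((A ×ˢ Finset.univ).filter
        (fun q : Fin n × Fin n => q.1 ≠ q.2 ∧ s(q.1, q.2) = s(a, b))) ⊆
        {(a, b), (b, a)} := by
      intro q hq
      simp only [Finset.mem_filter] at hq
      rcases Sym2.eq_iff.mp hq.2.2 with ⟨h1, h2⟩ | ⟨h1, h2⟩ <;>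
        simp [Finset.mem_insert, Prod.ext_iff, h1, h2]
    calc edgeMult n A s(a, b) ≤ ({(a, b), (b, a)} : Finset (Fin n × Fin n)).card :=
          Finset.card_le_card hsub
      _ ≤ 2 := Finset.card_insert_le _ _ |>.trans (by simp)

lemma edgeMult_filter (n : ℕ) (A : Finset (Fin n)) (e : Sym2 (Fin n)) :
    edgeMult n A e = (((A ×ˢ Finset.univ).filter
      (fun q : Fin n × Fin n => q.1 ≠ q.2)).filter
      (fun q : Fin n × Fin n => s(q.1, q.2) = e)).card := by
  rw [Finset.filter_filter]
  rfl

lemma sum_edgeMult_le (n : ℕ) (A : Finset (Fin n)) :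
    ∑ e : Sym2 (Fin n), edgeMult n A e ≤ A.card * n := by
  simp_rw [edgeMult_filter]
  rw [← Finset.card_eq_sum_card_fiberwise
    (f := fun q : Fin n × Fin n => s(q.1, q.2)) (fun q _ => Finset.mem_univ _)]
  calc ((A ×ˢ Finset.univ).filter (fun q : Fin n × Fin n => q.1 ≠ q.2)).card
      ≤ (A ×ˢ (Finset.univ : Finset (Fin n))).card := Finset.card_filter_le _ _
    _ = A.card * n := by simp [Finset.card_product]

lemma sum_deg_eq (n : ℕ) (A : Finset (Fin n)) (ω : Sym2 (Fin n) → Bool) :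
    ((∑ u ∈ A, deg ω u : ℕ) : ℝ) =
      ∑ e : Sym2 (Fin n), (edgeMult n A e : ℝ) * (if ω e = true then 1 else 0) := by
  have h1 : (∑ u ∈ A, deg ω u : ℕ) =
      ∑ q ∈ A ×ˢ Finset.univ, (if q.1 ≠ q.2 ∧ ω s(q.1, q.2) = true then 1 else 0) := by
    rw [Finset.sum_product]
    refine Finset.sum_congr rfl fun u _ => ?_
    rw [deg, Finset.card_filter]
    exact Finset.sum_congr rfl fun v _ => by simp [Adj]; congr
  rw [h1]
  push_cast
  rw [← Finset.sum_fiberwise_of_maps_to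
    (g := fun q : Fin n × Fin n => s(q.1, q.2)) (fun q _ => Finset.mem_univ _)]
  refine Finset.sum_congr rfl fun e _ => ?_
  have key : ∀ q ∈ (A ×ˢ Finset.univ).filter (fun q : Fin n × Fin n => s(q.1, q.2) = e),
      (if q.1 ≠ q.2 ∧ ω s(q.1, q.2) = true then (1 : ℝ) else 0) =
        (if ω e = true then (1 : ℝ) else 0) * (if q.1 ≠ q.2 then (1 : ℝ) else 0) := by
    intro q hq
    simp only [Finset.mem_filter] at hq
    rw [hq.2]
    by_cases h1 : q.1 ≠ q.2 <;> by_cases h2 : ω e = true <;> simp [h1, h2]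
  rw [Finset.sum_congr rfl key, ← Finset.mul_sum, mul_comm]
  congr 1
  have hf : ((A ×ˢ Finset.univ).filter
      (fun q : Fin n × Fin n => q.1 ≠ q.2 ∧ s(q.1, q.2) = e)) =
      (((A ×ˢ Finset.univ).filter (fun q : Fin n × Fin n => s(q.1, q.2) = e)).filter
        (fun q : Fin n × Fin n => q.1 ≠ q.2)) := by
    rw [Finset.filter_filter]
    ext q
    simp only [Finset.mem_filter]
    tauto
  rw [edgeMult, hf]
  push_cast [Finset.card_filter]
  rfl

lemma mgf_coord (n : ℕ) (p : ℝ≥0) (hp : p ≤ 1) (e : Sym2 (Fin n)) (c : ℕ) (l : ℝ) :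
    mgf (fun ω : Sym2 (Fin n) → Bool => (c : ℝ) * (if ω e = true then 1 else 0))
      (erMeasure n p hp) l = (p : ℝ) * Real.exp (l * c) + (1 - (p : ℝ)) := by
  have hcast : ((p : ℝ≥0∞) : ℝ≥0∞) ≤ 1 := by exact_mod_cast hp
  rw [mgf]
  set f : Bool → ℝ := fun b => Real.exp (l * ((c : ℝ) * (if b = true then 1 else 0))) with hf
  have hcomp : ∫ ω, Real.exp (l * ((c : ℝ) * (if ω e = true then 1 else 0)))
      ∂(erMeasure n p hp) = ∫ ω, f (ω e) ∂(erMeasure n p hp) := rfl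
  rw [hcomp]
  rw [← integral_map (μ := erMeasure n p hp) (φ := fun ω => ω e)
      (measurable_pi_apply e).aemeasurable ((measurable_of_countable f).aestronglyMeasurable)]
  rw [show ((erMeasure n p hp).map (fun ω : Sym2 (Fin n) → Bool => ω e)) =
      (PMF.bernoulli p hp).toMeasure from map_eval_pi _ e]
  rw [PMF.integral_eq_sum]
  simp only [Fintype.sum_bool, PMF.bernoulli_apply, Bool.cond_true, Bool.cond_false,
    if_true, if_false]
  rw [ENNReal.coe_toReal, ENNReal.coe_toReal, NNReal.coe_sub hp, NNReal.coe_one]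
  simp only [hf, reduceIte, Bool.false_eq_true, if_true, if_false, mul_one, mul_zero,
    Real.exp_zero, smul_eq_mul, ENNReal.coe_toReal]

/-- **Lemma 6.2**: tail bound for the sum of degrees over a set of vertices. -/
theorem degree_sum_tail (n : ℕ) (p : ℝ≥0) (hp : p ≤ 1) (A : Finset (Fin n))
    (hA : A.Nonempty) (t : ℝ) (ht : 0 < t) :
    erMeasure n p hp {ω | t ≤ ((∑ u ∈ A, deg ω u : ℕ) : ℝ)} ≤
      ENNReal.ofReal
        (Real.exp (-(t / 2) * Real.log (t / (6 * n * A.card * (p : ℝ))))) := by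
  haveI hprob : IsProbabilityMeasure (erMeasure n p hp) := by
    unfold erMeasure; infer_instance
  obtain ⟨a, haA⟩ := hA
  have hn : 0 < n := a.pos
  have hAc : 0 < A.card := Finset.card_pos.mpr ⟨a, haA⟩
  by_cases hp0 : (p : ℝ) = 0
  · have h6 : (6 : ℝ) * n * A.card * (p : ℝ) = 0 := by rw [hp0]; ring
    rw [h6, div_zero, Real.log_zero, mul_zero, Real.exp_zero, ENNReal.ofReal_one]
    exact prob_le_one
  have hpr : 0 < (p : ℝ) := lt_of_le_of_ne p.coe_nonneg (Ne.symm hp0)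
  set m : ℝ := (n : ℝ) * A.card * (p : ℝ) with hmdef
  have hm : (0 : ℝ) < m := by positivity
  have h6m : (6 : ℝ) * n * A.card * p = 6 * m := by rw [hmdef]; ring
  rw [h6m]
  by_cases hts : t ≤ 6 * m
  · have hx : 0 < t / (6 * m) := by positivity
    have hle : t / (6 * m) ≤ 1 := (div_le_one (by positivity)).mpr hts
    have hlog : Real.log (t / (6 * m)) ≤ 0 := Real.log_nonpos hx.le hle
    have hone : (1 : ℝ) ≤ Real.exp (-(t / 2) * Real.log (t / (6 * m))) := by
      rw [← Real.exp_zero]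
      apply Real.exp_le_exp.mpr
      nlinarith
    calc erMeasure n p hp _ ≤ 1 := prob_le_one
      _ ≤ ENNReal.ofReal (Real.exp (-(t / 2) * Real.log (t / (6 * m)))) := by
          rw [← ENNReal.ofReal_one]; exact ENNReal.ofReal_le_ofReal hone
  push_neg at hts
  set μ := erMeasure n p hp with hμ
  set l : ℝ := Real.log (t / m) / 2 with hldef
  have htm : (6 : ℝ) < t / m := (lt_div_iff₀ hm).mpr (by linarith)
  have hl0 : 0 < l := by
    have h1 : (1 : ℝ) < t / m := by linarith
    have := Real.log_pos h1
    rw [hldef]; linarith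
  have he2l : Real.exp (2 * l) = t / m := by
    rw [hldef, show 2 * (Real.log (t / m) / 2) = Real.log (t / m) by ring,
      Real.exp_log (by positivity)]
  set c : Sym2 (Fin n) → ℕ := edgeMult n A with hc
  set X : Sym2 (Fin n) → (Sym2 (Fin n) → Bool) → ℝ :=
    fun e ω => (c e : ℝ) * (if ω e = true then 1 else 0) with hX
  have hXmeas : ∀ e, Measurable (X e) := by
    intro e
    have he : X e = (fun b : Bool => (c e : ℝ) * (if b = true then 1 else 0)) ∘
        (fun ω : Sym2 (Fin n) → Bool => ω e) := rfl
    rw [he]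
    exact (measurable_of_countable _).comp (measurable_pi_apply e)
  have hindep : iIndepFun X μ := by
    have h := iIndepFun_eval (ι := Sym2 (Fin n))
      ((PMF.bernoulli p hp).toMeasure)
    exact h.comp (fun e => fun b : Bool => (c e : ℝ) * (if b = true then 1 else 0))
      (fun e => measurable_of_countable _)
  have hint : ∀ e : Sym2 (Fin n), Integrable (fun ω => Real.exp (l * X e ω)) μ := by
    intro e
    refine Integrable.mono' (integrable_const (Real.exp (l * (c e))))
      (((hXmeas e).const_mul l).exp.aestronglyMeasurable) (ae_of_all _ fun ω => ?_)
    rw [Real.norm_eq_abs, abs_of_pos (Real.exp_pos _)]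
    apply Real.exp_le_exp.mpr
    apply mul_le_mul_of_nonneg_left _ hl0.le
    by_cases hb : ω e = true <;> simp [hX, hb]
  have hset : {ω : Sym2 (Fin n) → Bool | t ≤ ((∑ u ∈ A, deg ω u : ℕ) : ℝ)} =
      {ω | t ≤ (∑ e : Sym2 (Fin n), X e) ω} := by
    ext ω
    simp only [Set.mem_setOf_eq, Finset.sum_apply]
    rw [sum_deg_eq n A ω]
  have hchern := measure_ge_le_exp_mul_mgf (μ := μ) (X := ∑ e : Sym2 (Fin n), X e)
    (t := l) t hl0.le (hindep.integrable_exp_mul_sum hXmeas (fun e _ => hint e))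
  rw [hindep.mgf_sum hXmeas] at hchern
  have hmgf_le : ∀ e : Sym2 (Fin n),
      mgf (X e) μ l ≤ Real.exp ((p : ℝ) * ((c e : ℝ) / 2) * (Real.exp (2 * l) - 1)) := by
    intro e
    rw [hX, hμ, mgf_coord n p hp e (c e) l]
    have hconv : Real.exp (l * (c e)) - 1 ≤ ((c e : ℝ) / 2) * (Real.exp (2 * l) - 1) := by
      have hc2 : (c e : ℝ) ≤ 2 := by exact_mod_cast edgeMult_le_two n A e
      have hc0 : (0 : ℝ) ≤ (c e : ℝ) := by positivity
      have ha1 : (0 : ℝ) ≤ 1 - (c e : ℝ) / 2 := by linarith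
      have ha2 : (0 : ℝ) ≤ (c e : ℝ) / 2 := by linarith
      have ha3 : (1 - (c e : ℝ) / 2) + (c e : ℝ) / 2 = 1 := by ring
      have hcv := convexOn_exp.2 (Set.mem_univ (0 : ℝ)) (Set.mem_univ (2 * l)) ha1 ha2 ha3
      simp only [smul_eq_mul, mul_zero, zero_add, Real.exp_zero] at hcv
      have harg : (c e : ℝ) / 2 * (2 * l) = l * (c e) := by ring
      rw [harg] at hcv
      linarith
    have h1 : (p : ℝ) * Real.exp (l * c e) + (1 - (p : ℝ)) =
        1 + (p : ℝ) * (Real.exp (l * c e) - 1) := by ring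
    rw [h1]
    calc 1 + (p : ℝ) * (Real.exp (l * c e) - 1)
        ≤ Real.exp ((p : ℝ) * (Real.exp (l * c e) - 1)) := by
          linarith [Real.add_one_le_exp ((p : ℝ) * (Real.exp (l * c e) - 1))]
      _ ≤ Real.exp ((p : ℝ) * ((c e : ℝ) / 2) * (Real.exp (2 * l) - 1)) := by
          apply Real.exp_le_exp.mpr
          have := mul_le_mul_of_nonneg_left hconv hpr.le
          linarith
  have hE1 : (1 : ℝ) ≤ Real.exp (2 * l) := by rw [he2l]; linarith
  have hprod : ∏ e : Sym2 (Fin n), mgf (X e) μ l ≤ Real.exp (t / 2) := by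
    calc ∏ e : Sym2 (Fin n), mgf (X e) μ l
        ≤ ∏ e : Sym2 (Fin n), Real.exp ((p : ℝ) * ((c e : ℝ) / 2) * (Real.exp (2 * l) - 1)) :=
          Finset.prod_le_prod (fun e _ => mgf_nonneg) (fun e _ => hmgf_le e)
      _ = Real.exp (∑ e : Sym2 (Fin n), (p : ℝ) * ((c e : ℝ) / 2) * (Real.exp (2 * l) - 1)) :=
          (Real.exp_sum _ _).symm
      _ ≤ Real.exp (t / 2) := by
          apply Real.exp_le_exp.mpr
          have hsum : ∑ e : Sym2 (Fin n), (p : ℝ) * ((c e : ℝ) / 2) * (Real.exp (2 * l) - 1)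
              = (p : ℝ) * (Real.exp (2 * l) - 1) / 2 * (∑ e : Sym2 (Fin n), (c e : ℝ)) := by
            rw [Finset.mul_sum]
            exact Finset.sum_congr rfl fun e _ => by ring
          rw [hsum]
          have hsumc : (∑ e : Sym2 (Fin n), (c e : ℝ)) ≤ (A.card : ℝ) * n := by
            have := sum_edgeMult_le n A
            push_cast
            exact_mod_cast this
          have hE : (0 : ℝ) ≤ Real.exp (2 * l) - 1 := by linarith
          have hsc0 : (0 : ℝ) ≤ ∑ e : Sym2 (Fin n), (c e : ℝ) :=
            Finset.sum_nonneg fun e _ => by positivity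
          have step1 : (p : ℝ) * (Real.exp (2 * l) - 1) / 2 * (∑ e : Sym2 (Fin n), (c e : ℝ))
              ≤ (p : ℝ) * (Real.exp (2 * l) - 1) / 2 * ((A.card : ℝ) * n) := by
            apply mul_le_mul_of_nonneg_left hsumc (by positivity)
          have hmt : m * (t / m) = t := by field_simp
          have hmm : (p : ℝ) * ((A.card : ℝ) * (n : ℝ)) = m := by rw [hmdef]; ring
          nlinarith [step1, hmt, hm.le, hmm, he2l]
  have hfinal : (μ {ω | t ≤ (∑ e : Sym2 (Fin n), X e) ω}).toReal ≤
      Real.exp (-(t / 2) * Real.log (t / (6 * m))) := by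
    calc (μ {ω | t ≤ (∑ e : Sym2 (Fin n), X e) ω}).toReal
        ≤ Real.exp (-l * t) * ∏ e : Sym2 (Fin n), mgf (X e) μ l := hchern
      _ ≤ Real.exp (-l * t) * Real.exp (t / 2) := by
          exact mul_le_mul_of_nonneg_left hprod (Real.exp_pos _).le
      _ = Real.exp (t / 2 - l * t) := by rw [← Real.exp_add]; ring_nf
      _ ≤ Real.exp (-(t / 2) * Real.log (t / (6 * m))) := by
          apply Real.exp_le_exp.mpr
          have hlog6 : Real.log (t / (6 * m)) = Real.log (t / m) - Real.log 6 := by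
            rw [show t / (6 * m) = (t / m) / 6 by ring,
              Real.log_div (by positivity) (by norm_num)]
          have h6e : (1 : ℝ) ≤ Real.log 6 := by
            have hexp6 : Real.exp 1 ≤ 6 :=
              le_of_lt (lt_of_lt_of_le Real.exp_one_lt_d9 (by norm_num))
            calc (1 : ℝ) = Real.log (Real.exp 1) := (Real.log_exp 1).symm
              _ ≤ Real.log 6 := Real.log_le_log (Real.exp_pos 1) hexp6
          have hhalf := mul_le_mul_of_nonneg_left h6e (by positivity : (0 : ℝ) ≤ t / 2)
          rw [hlog6, hldef]
          nlinarith [hhalf]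
  rw [hset]
  calc μ {ω | t ≤ (∑ e : Sym2 (Fin n), X e) ω}
      = ENNReal.ofReal ((μ {ω | t ≤ (∑ e : Sym2 (Fin n), X e) ω}).toReal) :=
        (ENNReal.ofReal_toReal (measure_ne_top μ _)).symm
    _ ≤ ENNReal.ofReal (Real.exp (-(t / 2) * Real.log (t / (6 * m)))) :=
        ENNReal.ofReal_le_ofReal hfinal
end
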